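/- arXiv:1911.11607 — 5 statements merged into one kernel-verified Lean document; each statement's English description precedes it below -/
import Mathlib

section
/- Let I be a countable index set, let (P_i)_{i∈I} and (Q_i)_{i∈I} be probability measures on a common measurable space, let (θ_i)_{i∈I} be nonnegative reals with Σ_i θ_i = 1, let p ∈ [0,1], and let f : [0,1] → [0,1] be a convex function such that T(P_i, Q_i)(α) ≥ f(α) for every i ∈ I and every α ∈ [0,1]. Then for every α ∈ [0,1], T(Σ_i θ_i·P_i, (1−p)·Σ_i θ_i·P_i + p·Σ_i θ_i·Q_i)(α) ≥ p·f(α) + (1−p)·(1−α). -/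
open MeasureTheory Filter Set

/-- The trade-off function `T(P,Q)` of two measures: `T(P,Q)(α)` is the minimum type II error
among all tests with type I error at most `α`. -/
noncomputable def tradeOff {Ω : Type*} [MeasurableSpace Ω] (P Q : Measure Ω) (α : ℝ) : ℝ :=
  sInf {β : ℝ | ∃ φ : Ω → ℝ, Measurable φ ∧ (∀ x, φ x ∈ Set.Icc (0:ℝ) 1) ∧
    (∫ x, φ x ∂P) ≤ α ∧ β = 1 - ∫ x, φ x ∂Q}

lemma test_integrable {Ω : Type*} [MeasurableSpace Ω] (μ : Measure Ω) [IsFiniteMeasure μ]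
    {φ : Ω → ℝ} (hm : Measurable φ) (hb : ∀ x, φ x ∈ Set.Icc (0:ℝ) 1) :
    Integrable φ μ := by
  refine ⟨hm.aestronglyMeasurable, HasFiniteIntegral.of_bounded (C := 1) ?_⟩
  filter_upwards with x
  rw [Real.norm_eq_abs, abs_le]
  exact ⟨by linarith [(hb x).1], (hb x).2⟩

lemma test_integral_mem {Ω : Type*} [MeasurableSpace Ω] (μ : Measure Ω) [IsProbabilityMeasure μ]
    {φ : Ω → ℝ} (hm : Measurable φ) (hb : ∀ x, φ x ∈ Set.Icc (0:ℝ) 1) :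
    (∫ x, φ x ∂μ) ∈ Set.Icc (0:ℝ) 1 := by
  constructor
  · exact integral_nonneg fun x => (hb x).1
  · calc (∫ x, φ x ∂μ) ≤ ∫ _, (1:ℝ) ∂μ :=
        integral_mono (test_integrable μ hm hb) (integrable_const 1) fun x => (hb x).2
    _ = 1 := by simp

lemma tradeOff_bddBelow {Ω : Type*} [MeasurableSpace Ω] (P Q : Measure Ω)
    [IsProbabilityMeasure Q] (α : ℝ) :
    BddBelow {β : ℝ | ∃ φ : Ω → ℝ, Measurable φ ∧ (∀ x, φ x ∈ Set.Icc (0:ℝ) 1) ∧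
      (∫ x, φ x ∂P) ≤ α ∧ β = 1 - ∫ x, φ x ∂Q} := by
  refine ⟨0, fun β hβ => ?_⟩
  obtain ⟨φ, hm, hb, -, rfl⟩ := hβ
  linarith [(test_integral_mem Q hm hb).2]

lemma tradeOff_le {Ω : Type*} [MeasurableSpace Ω] (P Q : Measure Ω)
    [IsProbabilityMeasure Q] {φ : Ω → ℝ} (hm : Measurable φ)
    (hb : ∀ x, φ x ∈ Set.Icc (0:ℝ) 1) {α : ℝ} (hα : (∫ x, φ x ∂P) ≤ α) :
    tradeOff P Q α ≤ 1 - ∫ x, φ x ∂Q :=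
  csInf_le (tradeOff_bddBelow P Q α) ⟨φ, hm, hb, hα, rfl⟩

lemma antitoneOn_of_convex {G : ℝ → ℝ} (hG : ConvexOn ℝ (Set.Icc (0:ℝ) 1) G)
    (h0 : ∀ x ∈ Set.Icc (0:ℝ) 1, 0 ≤ G x) (h1 : G 1 ≤ 0) :
    AntitoneOn G (Set.Icc (0:ℝ) 1) := by
  intro x hx y hy hxy
  rcases eq_or_lt_of_le hxy with rfl | hlt
  · exact le_refl _
  · rcases eq_or_lt_of_le hy.2 with rfl | hy1
    · exact h1.trans (h0 x hx)
    · have hx1 : x < 1 := hlt.trans hy1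
      have ha : (0:ℝ) ≤ (1 - y) / (1 - x) := by
        apply div_nonneg <;> linarith
      have hb : (0:ℝ) ≤ (y - x) / (1 - x) := by
        apply div_nonneg <;> linarith
      have hab : (1 - y) / (1 - x) + (y - x) / (1 - x) = 1 := by
        rw [← add_div]
        rw [div_eq_one_iff_eq (by linarith)]
        ring
      have hxy' : ((1 - y) / (1 - x)) • x + ((y - x) / (1 - x)) • 1 = y := by
        rw [smul_eq_mul, smul_eq_mul, mul_one, div_mul_eq_mul_div, ← add_div,
          div_eq_iff (show (1:ℝ) - x ≠ 0 by linarith)]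
        ring
      have := hG.2 hx (⟨zero_le_one, le_refl 1⟩ : (1:ℝ) ∈ Set.Icc (0:ℝ) 1) ha hb hab
      rw [hxy'] at this
      have h1' : ((y - x) / (1 - x)) • G 1 ≤ 0 := by
        rw [smul_eq_mul]
        exact mul_nonpos_of_nonneg_of_nonpos hb h1
      have h2' : ((1 - y) / (1 - x)) • G x ≤ G x := by
        rw [smul_eq_mul]
        have : (1 - y) / (1 - x) ≤ 1 := by
          rw [div_le_one (by linarith)]; linarith
        nlinarith [h0 x hx]
      calc G y ≤ ((1 - y) / (1 - x)) • G x + ((y - x) / (1 - x)) • G 1 := this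
        _ ≤ G x := by linarith

lemma support_line {G : ℝ → ℝ} (hG : ConvexOn ℝ (Set.Icc (0:ℝ) 1) G)
    (hanti : AntitoneOn G (Set.Icc (0:ℝ) 1)) {α : ℝ} (hα : α ∈ Set.Icc (0:ℝ) 1) (hα0 : 0 < α) :
    ∃ a ≤ 0, ∀ x ∈ Set.Icc (0:ℝ) 1, G α + a * (x - α) ≤ G x := by
  set S := (fun x => (G α - G x) / (α - x)) '' (Set.Ico (0:ℝ) α) with hS
  have hne : S.Nonempty := ⟨_, ⟨0, ⟨le_refl _, hα0⟩, rfl⟩⟩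
  have hub : ∀ s ∈ S, s ≤ 0 := by
    rintro s ⟨x, hx, rfl⟩
    apply div_nonpos_of_nonpos_of_nonneg
    · have := hanti ⟨hx.1, hx.2.le.trans hα.2⟩ hα hx.2.le
      linarith
    · linarith [hx.2]
  have hbdd : BddAbove S := ⟨0, hub⟩
  refine ⟨sSup S, csSup_le hne hub, ?_⟩
  intro x hx
  rcases lt_trichotomy x α with h | h | h
  · have hmem : (G α - G x) / (α - x) ∈ S := ⟨x, ⟨hx.1, h⟩, rfl⟩
    have h1 := le_csSup hbdd hmem
    rw [div_le_iff₀ (by linarith : (0:ℝ) < α - x)] at h1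
    nlinarith
  · subst h; simp
  · have key : sSup S ≤ (G x - G α) / (x - α) := by
      apply csSup_le hne
      rintro s ⟨u, hu, rfl⟩
      exact hG.slope_mono_adjacent ⟨hu.1, hu.2.le.trans hα.2⟩ hx hu.2 h
    rw [le_div_iff₀ (by linarith : (0:ℝ) < x - α)] at key
    nlinarith

lemma tsum_jensen {I : Type*} [Countable I] (θ : I → ℝ) (hθ : ∀ i, 0 ≤ θ i)
    (hsum : Summable θ) (hθ1 : ∑' i, θ i = 1)
    {G : ℝ → ℝ} (hG : ConvexOn ℝ (Set.Icc (0:ℝ) 1) G)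
    (hanti : AntitoneOn G (Set.Icc (0:ℝ) 1))
    (hGb : ∀ x ∈ Set.Icc (0:ℝ) 1, G x ∈ Set.Icc (0:ℝ) 1)
    (αs : I → ℝ) (hαs : ∀ i, αs i ∈ Set.Icc (0:ℝ) 1)
    {α : ℝ} (hα : α ∈ Set.Icc (0:ℝ) 1) (hle : ∑' i, θ i * αs i ≤ α) :
    G α ≤ ∑' i, θ i * G (αs i) := by
  have hsumα : Summable (fun i => θ i * αs i) :=
    Summable.of_nonneg_of_le (fun i => mul_nonneg (hθ i) (hαs i).1)
      (fun i => mul_le_of_le_one_right (hθ i) (hαs i).2) hsum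
  have hsumG : Summable (fun i => θ i * G (αs i)) :=
    Summable.of_nonneg_of_le (fun i => mul_nonneg (hθ i) (hGb _ (hαs i)).1)
      (fun i => mul_le_of_le_one_right (hθ i) (hGb _ (hαs i)).2) hsum
  rcases eq_or_lt_of_le hα.1 with hα0 | hα0
  · -- α = 0
    have hzero : ∀ i, θ i * αs i = 0 := by
      intro i
      have h1 : θ i * αs i ≤ ∑' j, θ j * αs j :=
        Summable.le_tsum hsumα i (fun j _ => mul_nonneg (hθ j) (hαs j).1)
      have h2 : 0 ≤ θ i * αs i := mul_nonneg (hθ i) (hαs i).1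
      rw [← hα0] at hle
      linarith
    have heq : (fun i => θ i * G (αs i)) = fun i => θ i * G 0 := by
      funext i
      rcases eq_or_lt_of_le (hθ i) with h | h
      · rw [← h, zero_mul, zero_mul]
      · have : αs i = 0 := by
          have := hzero i
          rcases mul_eq_zero.mp this with h' | h'
          · exact absurd h'.symm h.ne
          · exact h'
        rw [this]
    rw [heq, tsum_mul_right, hθ1, one_mul, ← hα0]
  · -- 0 < α
    obtain ⟨a, ha, hline⟩ := support_line hG hanti hα hα0
    have hlower : ∀ i, θ i * (G α + a * (αs i - α)) ≤ θ i * G (αs i) :=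
      fun i => mul_le_mul_of_nonneg_left (hline _ (hαs i)) (hθ i)
    have hsumL : Summable (fun i => θ i * (G α + a * (αs i - α))) := by
      have : (fun i => θ i * (G α + a * (αs i - α)))
          = fun i => (G α - a * α) * θ i + a * (θ i * αs i) := by
        funext i; ring
      rw [this]
      exact ((hsum.mul_left _).add (hsumα.mul_left a))
    have h1 : ∑' i, θ i * (G α + a * (αs i - α)) ≤ ∑' i, θ i * G (αs i) :=
      Summable.tsum_le_tsum hlower hsumL hsumG
    have h2 : ∑' i, θ i * (G α + a * (αs i - α))
        = (G α - a * α) * (∑' i, θ i) + a * ∑' i, θ i * αs i := by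
      have : (fun i => θ i * (G α + a * (αs i - α)))
          = fun i => (G α - a * α) * θ i + a * (θ i * αs i) := by
        funext i; ring
      rw [this, Summable.tsum_add (hsum.mul_left _) (hsumα.mul_left a), tsum_mul_left, tsum_mul_left]
    rw [h2, hθ1, mul_one] at h1
    nlinarith [mul_nonneg (neg_nonneg.mpr ha) (sub_nonneg.mpr hle)]

lemma mix_prob {Ω : Type*} [MeasurableSpace Ω] {I : Type*} (R : I → Measure Ω)
    [∀ i, IsProbabilityMeasure (R i)] (θ : I → ℝ) (hθ : ∀ i, 0 ≤ θ i)
    (hsum : Summable θ) (h1 : ∑' i, θ i = 1) :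
    IsProbabilityMeasure (Measure.sum fun i => ENNReal.ofReal (θ i) • R i) := by
  constructor
  rw [Measure.sum_apply _ MeasurableSet.univ]
  simp only [Measure.smul_apply, measure_univ, smul_eq_mul, mul_one]
  rw [← ENNReal.ofReal_tsum_of_nonneg hθ hsum, h1, ENNReal.ofReal_one]

theorem stmt_0 {Ω : Type*} [MeasurableSpace Ω] {I : Type*} [Countable I]
    (P Q : I → Measure Ω) [∀ i, IsProbabilityMeasure (P i)] [∀ i, IsProbabilityMeasure (Q i)]
    (θ : I → ℝ) (hθ : ∀ i, 0 ≤ θ i) (hθsum : ∑' i, θ i = 1)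
    (p : ℝ) (hp : p ∈ Set.Icc (0:ℝ) 1)
    (f : ℝ → ℝ) (hconv : ConvexOn ℝ (Set.Icc (0:ℝ) 1) f)
    (hrange : ∀ α ∈ Set.Icc (0:ℝ) 1, f α ∈ Set.Icc (0:ℝ) 1)
    (hf : ∀ i, ∀ α ∈ Set.Icc (0:ℝ) 1, f α ≤ tradeOff (P i) (Q i) α) :
    ∀ α ∈ Set.Icc (0:ℝ) 1,
      p * f α + (1 - p) * (1 - α) ≤
        tradeOff (Measure.sum (fun i => ENNReal.ofReal (θ i) • P i))
          (ENNReal.ofReal (1 - p) • Measure.sum (fun i => ENNReal.ofReal (θ i) • P i)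
            + ENNReal.ofReal p • Measure.sum (fun i => ENNReal.ofReal (θ i) • Q i)) α := by
  intro α hα
  obtain ⟨p0, p1⟩ := hp
  have hsum : Summable θ := by
    by_contra h
    rw [tsum_eq_zero_of_not_summable h] at hθsum
    norm_num at hθsum
  have hIne : Nonempty I := by
    by_contra h
    rw [not_nonempty_iff] at h
    rw [tsum_empty] at hθsum
    norm_num at hθsum
  haveI hPprob := mix_prob P θ hθ hsum hθsum
  haveI hQprob := mix_prob Q θ hθ hsum hθsum
  -- the function G
  set G : ℝ → ℝ := fun x => p * f x + (1 - p) * (1 - x) with hGdef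
  have hGconv : ConvexOn ℝ (Set.Icc (0:ℝ) 1) G := by
    refine ⟨convex_Icc _ _, fun x hx y hy a b ha hb hab => ?_⟩
    have hf2 := hconv.2 hx hy ha hb hab
    simp only [smul_eq_mul, hGdef] at hf2 ⊢
    have key := mul_le_mul_of_nonneg_left hf2 p0
    nlinarith [key]
  have hG0 : ∀ x ∈ Set.Icc (0:ℝ) 1, 0 ≤ G x := by
    intro x hx
    have h1 := (hrange x hx).1
    have : (0:ℝ) ≤ 1 - x := by linarith [hx.2]
    simp only [hGdef]
    have := mul_nonneg p0 h1
    nlinarith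
  have hf1 : f 1 ≤ 0 := by
    obtain ⟨i⟩ := hIne
    have h0 : tradeOff (P i) (Q i) 1 ≤ 1 - ∫ x, (1:ℝ) ∂(Q i) := by
      refine tradeOff_le _ _ measurable_const (fun x => ⟨zero_le_one, le_refl 1⟩) ?_
      simp
    simp only [integral_const, measure_univ, probReal_univ, ENNReal.toReal_one, smul_eq_mul, one_mul,
      sub_self] at h0
    exact (hf i 1 ⟨zero_le_one, le_refl 1⟩).trans h0
  have hG1 : G 1 ≤ 0 := by
    simp only [hGdef, sub_self, mul_zero, add_zero]
    exact mul_nonpos_of_nonneg_of_nonpos p0 hf1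
  have hGanti : AntitoneOn G (Set.Icc (0:ℝ) 1) := antitoneOn_of_convex hGconv hG0 hG1
  have hGb : ∀ x ∈ Set.Icc (0:ℝ) 1, G x ∈ Set.Icc (0:ℝ) 1 := by
    intro x hx
    refine ⟨hG0 x hx, ?_⟩
    have h1 := (hrange x hx).2
    simp only [hGdef]
    nlinarith [hx.1, hx.2]
  -- main bound via le_csInf
  show G α ≤ tradeOff _ _ α
  rw [tradeOff]
  apply le_csInf
  · exact ⟨_, fun _ => (0:ℝ), measurable_const, fun x => ⟨le_refl 0, zero_le_one⟩,
      by simpa using hα.1, rfl⟩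
  · rintro β ⟨φ, hm, hb, hlev, rfl⟩
    set αs : I → ℝ := fun i => ∫ x, φ x ∂(P i) with hαsdef
    set qs : I → ℝ := fun i => ∫ x, φ x ∂(Q i) with hqsdef
    have hαs : ∀ i, αs i ∈ Set.Icc (0:ℝ) 1 := fun i => test_integral_mem (P i) hm hb
    have hqs : ∀ i, qs i ∈ Set.Icc (0:ℝ) 1 := fun i => test_integral_mem (Q i) hm hb
    have hintP : Integrable φ (Measure.sum fun i => ENNReal.ofReal (θ i) • P i) :=
      test_integrable _ hm hb
    have hintQ : Integrable φ (Measure.sum fun i => ENNReal.ofReal (θ i) • Q i) :=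
      test_integrable _ hm hb
    have e1 : (∫ x, φ x ∂(Measure.sum fun i => ENNReal.ofReal (θ i) • P i))
        = ∑' i, θ i * αs i := by
      rw [integral_sum_measure hintP]
      refine tsum_congr fun i => ?_
      rw [integral_smul_measure, ENNReal.toReal_ofReal (hθ i), smul_eq_mul]
    have e2 : (∫ x, φ x ∂(Measure.sum fun i => ENNReal.ofReal (θ i) • Q i))
        = ∑' i, θ i * qs i := by
      rw [integral_sum_measure hintQ]
      refine tsum_congr fun i => ?_
      rw [integral_smul_measure, ENNReal.toReal_ofReal (hθ i), smul_eq_mul]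
    have eM : (∫ x, φ x ∂(ENNReal.ofReal (1 - p) • Measure.sum (fun i => ENNReal.ofReal (θ i) • P i)
            + ENNReal.ofReal p • Measure.sum (fun i => ENNReal.ofReal (θ i) • Q i)))
        = (1 - p) * (∑' i, θ i * αs i) + p * (∑' i, θ i * qs i) := by
      rw [integral_add_measure (hintP.smul_measure ENNReal.ofReal_ne_top)
        (hintQ.smul_measure ENNReal.ofReal_ne_top), integral_smul_measure,
        integral_smul_measure, ENNReal.toReal_ofReal (by linarith : (0:ℝ) ≤ 1 - p),
        ENNReal.toReal_ofReal p0, smul_eq_mul, smul_eq_mul, e1, e2]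
    rw [e1] at hlev
    -- summabilities
    have hsumα : Summable (fun i => θ i * αs i) :=
      Summable.of_nonneg_of_le (fun i => mul_nonneg (hθ i) (hαs i).1)
        (fun i => mul_le_of_le_one_right (hθ i) (hαs i).2) hsum
    have hsumq : Summable (fun i => θ i * qs i) :=
      Summable.of_nonneg_of_le (fun i => mul_nonneg (hθ i) (hqs i).1)
        (fun i => mul_le_of_le_one_right (hθ i) (hqs i).2) hsum
    have hsumG : Summable (fun i => θ i * G (αs i)) :=
      Summable.of_nonneg_of_le (fun i => mul_nonneg (hθ i) (hGb _ (hαs i)).1)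
        (fun i => mul_le_of_le_one_right (hθ i) (hGb _ (hαs i)).2) hsum
    -- step 1: Jensen-type
    have step1 : G α ≤ ∑' i, θ i * G (αs i) :=
      tsum_jensen θ hθ hsum hθsum hGconv hGanti hGb αs hαs hα hlev
    -- step 2: pointwise per-index bound
    have step2 : ∀ i, θ i * G (αs i) ≤ θ i * (p * (1 - qs i) + (1 - p) * (1 - αs i)) := by
      intro i
      apply mul_le_mul_of_nonneg_left _ (hθ i)
      have h1 : f (αs i) ≤ tradeOff (P i) (Q i) (αs i) := hf i _ (hαs i)
      have h2 : tradeOff (P i) (Q i) (αs i) ≤ 1 - qs i :=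
        tradeOff_le (P i) (Q i) hm hb (le_refl _)
      simp only [hGdef]
      nlinarith [h1.trans h2]
    have hsumR : Summable (fun i => θ i * (p * (1 - qs i) + (1 - p) * (1 - αs i))) := by
      have heq : (fun i => θ i * (p * (1 - qs i) + (1 - p) * (1 - αs i)))
          = fun i => θ i - (p * (θ i * qs i) + (1 - p) * (θ i * αs i)) := by
        funext i; ring
      rw [heq]
      exact hsum.sub ((hsumq.mul_left p).add (hsumα.mul_left (1 - p)))
    have step3 : ∑' i, θ i * G (αs i)
        ≤ ∑' i, θ i * (p * (1 - qs i) + (1 - p) * (1 - αs i)) :=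
      Summable.tsum_le_tsum step2 hsumG hsumR
    have step4 : ∑' i, θ i * (p * (1 - qs i) + (1 - p) * (1 - αs i))
        = 1 - (p * (∑' i, θ i * qs i) + (1 - p) * (∑' i, θ i * αs i)) := by
      have heq : (fun i => θ i * (p * (1 - qs i) + (1 - p) * (1 - αs i)))
          = fun i => θ i - (p * (θ i * qs i) + (1 - p) * (θ i * αs i)) := by
        funext i; ring
      rw [heq, Summable.tsum_sub hsum ((hsumq.mul_left p).add (hsumα.mul_left (1 - p))),
        Summable.tsum_add (hsumq.mul_left p) (hsumα.mul_left (1 - p)), tsum_mul_left, tsum_mul_left,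
        hθsum]
    rw [eM]
    linarith [step1.trans (step3.trans_eq step4)]
end

section
/- Let μ₁ and μ₁' be probability measures on a measurable space Y, let κ and κ' be Markov kernels from Y to a measurable space Z, and let P, Q be probability measures on a measurable space Ω₁ and P', Q' probability measures on a measurable space Ω₂. Suppose that T(μ₁, μ₁')(α) ≥ T(P, Q)(α) for all α ∈ [0,1], and that for every y ∈ Y, T(κ(y), κ'(y))(α) ≥ T(P', Q')(α) for all α ∈ [0,1]. Then for every α ∈ [0,1], T(μ₁ ⊗ κ, μ₁' ⊗ κ')(α) ≥ T(P × P', Q × Q')(α), where μ ⊗ κ denotes the measure on Y × Z obtained by composing μ with the kernel κ (the joint distribution of the first output and the second output given the first), and P × P' denotes the product measure. -/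
set_option linter.unusedSectionVars false
set_option linter.unusedVariables false
set_option maxHeartbeats 1000000

open MeasureTheory ProbabilityTheory Filter Set
open scoped ENNReal

namespace FDP

variable {Ω : Type*} [MeasurableSpace Ω]

/-- The set over which `tradeOff` takes an infimum. -/
def TOSet (P Q : Measure Ω) (α : ℝ) : Set ℝ :=
  {β : ℝ | ∃ φ : Ω → ℝ, Measurable φ ∧ (∀ x, φ x ∈ Set.Icc (0:ℝ) 1) ∧
    (∫ x, φ x ∂P) ≤ α ∧ β = 1 - ∫ x, φ x ∂Q}

lemma tradeOff_eq (P Q : Measure Ω) (α : ℝ) : tradeOff P Q α = sInf (TOSet P Q α) := rfl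

lemma test_integrable (P : Measure Ω) [IsFiniteMeasure P] {φ : Ω → ℝ} (hm : Measurable φ)
    (hb : ∀ x, φ x ∈ Icc (0:ℝ) 1) : Integrable φ P := by
  refine (integrable_const (1:ℝ)).mono' hm.aestronglyMeasurable ?_
  refine Eventually.of_forall fun x => ?_
  rw [Real.norm_eq_abs, abs_of_nonneg (hb x).1]
  exact (hb x).2

lemma test_integral_nonneg (P : Measure Ω) {φ : Ω → ℝ}
    (hb : ∀ x, φ x ∈ Icc (0:ℝ) 1) : 0 ≤ ∫ x, φ x ∂P :=
  integral_nonneg fun x => (hb x).1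

lemma test_integral_le_one (P : Measure Ω) [IsProbabilityMeasure P] {φ : Ω → ℝ}
    (hm : Measurable φ) (hb : ∀ x, φ x ∈ Icc (0:ℝ) 1) : ∫ x, φ x ∂P ≤ 1 := by
  calc ∫ x, φ x ∂P ≤ ∫ _, (1:ℝ) ∂P :=
        integral_mono (test_integrable P hm hb) (integrable_const 1) fun x => (hb x).2
  _ = 1 := by simp

lemma TOSet_bddBelow (P Q : Measure Ω) [IsProbabilityMeasure Q] (α : ℝ) :
    BddBelow (TOSet P Q α) := by
  refine ⟨0, fun β hβ => ?_⟩
  obtain ⟨φ, hm, hb, -, rfl⟩ := hβ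
  linarith [test_integral_le_one Q hm hb]

lemma TOSet_nonempty (P Q : Measure Ω) {α : ℝ} (hα : 0 ≤ α) :
    (TOSet P Q α).Nonempty :=
  ⟨1, fun _ => 0, measurable_const, fun _ => ⟨le_refl _, zero_le_one⟩, by simpa, by simp⟩

lemma tradeOff_nonneg (P Q : Measure Ω) [IsProbabilityMeasure Q] (α : ℝ) :
    0 ≤ tradeOff P Q α := by
  rw [tradeOff_eq]
  rcases (TOSet P Q α).eq_empty_or_nonempty with h | h
  · simp [h, Real.sInf_empty]
  · refine le_csInf h fun β hβ => ?_
    obtain ⟨φ, hm, hb, -, rfl⟩ := hβ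
    linarith [test_integral_le_one Q hm hb]

lemma tradeOff_le (P Q : Measure Ω) [IsProbabilityMeasure Q] {α : ℝ} {φ : Ω → ℝ}
    (hm : Measurable φ) (hb : ∀ x, φ x ∈ Icc (0:ℝ) 1) (hl : ∫ x, φ x ∂P ≤ α) :
    tradeOff P Q α ≤ 1 - ∫ x, φ x ∂Q :=
  csInf_le (TOSet_bddBelow P Q α) ⟨φ, hm, hb, hl, rfl⟩

lemma le_tradeOff (P Q : Measure Ω) {α B : ℝ} (hα : 0 ≤ α)
    (h : ∀ φ : Ω → ℝ, Measurable φ → (∀ x, φ x ∈ Icc (0:ℝ) 1) → ∫ x, φ x ∂P ≤ α →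
      ∫ x, φ x ∂Q ≤ B) : 1 - B ≤ tradeOff P Q α := by
  rw [tradeOff_eq]
  refine le_csInf (TOSet_nonempty P Q hα) fun β hβ => ?_
  obtain ⟨φ, hm, hb, hl, rfl⟩ := hβ
  linarith [h φ hm hb hl]

lemma tradeOff_anti (P Q : Measure Ω) [IsProbabilityMeasure Q] {α α' : ℝ} (hα : 0 ≤ α)
    (h : α ≤ α') : tradeOff P Q α' ≤ tradeOff P Q α := by
  rw [tradeOff_eq, tradeOff_eq]
  refine csInf_le_csInf (TOSet_bddBelow P Q α') (TOSet_nonempty P Q hα) ?_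
  rintro β ⟨φ, hm, hb, hl, rfl⟩
  exact ⟨φ, hm, hb, hl.trans h, rfl⟩

lemma tradeOff_le_one (P Q : Measure Ω) [IsProbabilityMeasure Q] {α : ℝ} (hα : 0 ≤ α) :
    tradeOff P Q α ≤ 1 := by
  have := tradeOff_le P Q (α := α) (φ := fun _ => 0) measurable_const
    (fun _ => ⟨le_refl _, zero_le_one⟩) (by simpa)
  simpa using this

lemma exists_test_near (P Q : Measure Ω) [IsProbabilityMeasure Q] {α ε : ℝ} (hα : 0 ≤ α)
    (hε : 0 < ε) : ∃ φ : Ω → ℝ, Measurable φ ∧ (∀ x, φ x ∈ Icc (0:ℝ) 1) ∧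
      ∫ x, φ x ∂P ≤ α ∧ 1 - tradeOff P Q α - ε ≤ ∫ x, φ x ∂Q := by
  obtain ⟨β, hβ, hlt⟩ := Real.lt_sInf_add_pos (TOSet_nonempty P Q hα) hε
  obtain ⟨φ, hm, hb, hl, rfl⟩ := hβ
  rw [← tradeOff_eq] at hlt
  exact ⟨φ, hm, hb, hl, by linarith⟩


section NP

variable (P Q : Measure Ω) [IsProbabilityMeasure P] [IsProbabilityMeasure Q]

/-- density of `Q` w.r.t. `P + Q`. -/
noncomputable def dq : Ω → ℝ≥0∞ := Q.rnDeriv (P + Q)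

lemma dq_meas : Measurable (dq P Q) := Measure.measurable_rnDeriv _ _

lemma Q_ac : Q ≪ P + Q := Measure.absolutelyContinuous_of_le (Measure.le_add_left le_rfl)

lemma Q_eq_withDensity : (P + Q).withDensity (dq P Q) = Q :=
  Measure.withDensity_rnDeriv_eq _ _ (Q_ac P Q)

lemma dq_le_one : ∀ᵐ x ∂(P + Q), dq P Q x ≤ 1 :=
  Measure.rnDeriv_le_one_of_le (Measure.le_add_left le_rfl)

lemma P_le_nu (s : Set Ω) : P s ≤ (P + Q) s := by
  rw [Measure.add_apply]; exact le_self_add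

lemma Q_le_nu (s : Set Ω) : Q s ≤ (P + Q) s := by
  rw [Measure.add_apply]; exact le_add_self

/-- thresholds for which the P-measure of strict exceedance is at most `m`. -/
def thrSet (m : ℝ) : Set ℝ≥0∞ := {c | P {x | c < dq P Q x} ≤ ENNReal.ofReal m}

/-- the Neyman–Pearson threshold at level `m`. -/
noncomputable def thr (m : ℝ) : ℝ≥0∞ := sInf (thrSet P Q m)

lemma measurableSet_gt (c : ℝ≥0∞) : MeasurableSet {x | c < dq P Q x} :=
  measurableSet_lt measurable_const (dq_meas P Q)

lemma measurableSet_eq_c (c : ℝ≥0∞) : MeasurableSet {x | dq P Q x = c} :=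
  (dq_meas P Q) (measurableSet_singleton c)

lemma nu_gt_one_null : (P + Q) {x | 1 < dq P Q x} = 0 := by
  have h := dq_le_one P Q
  rw [ae_iff] at h
  simpa [not_le] using h

lemma P_gt_one_null : P {x | 1 < dq P Q x} = 0 :=
  le_antisymm ((P_le_nu P Q _).trans (nu_gt_one_null P Q).le) (zero_le)

lemma one_mem_thrSet {m : ℝ} (hm : 0 ≤ m) : (1 : ℝ≥0∞) ∈ thrSet P Q m := by
  simp [thrSet, P_gt_one_null P Q]

lemma thrSet_upward {m : ℝ} {c c' : ℝ≥0∞} (hc : c ∈ thrSet P Q m) (h : c ≤ c') :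
    c' ∈ thrSet P Q m := by
  refine le_trans (measure_mono fun x hx => ?_) hc
  exact lt_of_le_of_lt h hx

lemma thr_le_one {m : ℝ} (hm : 0 ≤ m) : thr P Q m ≤ 1 :=
  sInf_le (one_mem_thrSet P Q hm)

lemma thr_ne_top {m : ℝ} (hm : 0 ≤ m) : thr P Q m ≠ ∞ :=
  ne_top_of_le_ne_top (by simp) (thr_le_one P Q hm)

lemma measure_gt_thr_le {m : ℝ} (hm : 0 ≤ m) :
    P {x | thr P Q m < dq P Q x} ≤ ENNReal.ofReal m := by
  have hmem : ∀ n : ℕ, thr P Q m + (((n:ℕ)+1 : ℕ) : ℝ≥0∞)⁻¹ ∈ thrSet P Q m := by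
    intro n
    obtain ⟨c, hc, hlt⟩ := exists_lt_of_csInf_lt (α := ℝ≥0∞)
      ⟨1, one_mem_thrSet P Q hm⟩ (show thr P Q m < thr P Q m + (((n:ℕ)+1 : ℕ) : ℝ≥0∞)⁻¹ from
        ENNReal.lt_add_right (thr_ne_top P Q hm) (by simp))
    exact thrSet_upward P Q hc hlt.le
  have hU : {x | thr P Q m < dq P Q x} =
      ⋃ n : ℕ, {x | thr P Q m + (((n:ℕ)+1 : ℕ) : ℝ≥0∞)⁻¹ < dq P Q x} := by
    ext x
    simp only [mem_setOf_eq, mem_iUnion]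
    constructor
    · intro hx
      obtain ⟨r, hr0, hrlt⟩ := ENNReal.lt_iff_exists_add_pos_lt.mp hx
      obtain ⟨n, hn⟩ := ENNReal.exists_inv_nat_lt (show ((r:ℝ≥0∞)) ≠ 0 by
        simpa using hr0.ne')
      refine ⟨n, lt_of_le_of_lt (add_le_add le_rfl ?_) hrlt⟩
      refine le_trans ?_ hn.le
      exact ENNReal.inv_le_inv.mpr (by exact_mod_cast Nat.le_succ n)
    · intro ⟨n, hn⟩
      exact lt_of_le_of_lt le_self_add hn
  have hmono : Monotone fun n : ℕ =>
      {x | thr P Q m + (((n:ℕ)+1 : ℕ) : ℝ≥0∞)⁻¹ < dq P Q x} := by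
    intro n k hnk x hx
    refine lt_of_le_of_lt (add_le_add le_rfl (ENNReal.inv_le_inv.mpr ?_)) hx
    exact_mod_cast Nat.succ_le_succ hnk
  rw [hU, hmono.measure_iUnion]
  exact iSup_le fun n => hmem n

lemma measure_ge_thr {m : ℝ} (hm : m ≤ 1) :
    ENNReal.ofReal m ≤ P {x | thr P Q m ≤ dq P Q x} := by
  rcases eq_or_ne (thr P Q m) 0 with h0 | h0
  · have : {x | thr P Q m ≤ dq P Q x} = univ := by
      ext x; simp [h0]
    rw [this]
    simp only [measure_univ]
    exact le_trans (ENNReal.ofReal_le_ofReal hm) (by simp)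
  rcases le_or_gt m 0 with hm0 | hm0
  · simp [ENNReal.ofReal_eq_zero.mpr hm0]
  have hmtop : thr P Q m ≠ ∞ := thr_ne_top P Q hm0.le
  set c : ℕ → ℝ≥0∞ := fun n => thr P Q m - thr P Q m * (((n:ℕ)+1 : ℕ) : ℝ≥0∞)⁻¹ with hc
  have hclt : ∀ n, c n < thr P Q m := fun n =>
    ENNReal.sub_lt_self hmtop h0 (by
      refine mul_ne_zero h0 (by simp))
  have hnotmem : ∀ n, ¬ (c n ∈ thrSet P Q m) := fun n hmem =>
    absurd (sInf_le hmem) (not_le.mpr (hclt n))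
  have hgt : ∀ n, ENNReal.ofReal m ≤ P {x | c n < dq P Q x} := fun n =>
    (le_of_lt (not_le.mp (hnotmem n)))
  have hanti : Antitone fun n : ℕ => {x | c n < dq P Q x} := by
    intro n k hnk x hx
    refine lt_of_le_of_lt (tsub_le_tsub (le_refl (thr P Q m)) ?_) hx
    exact mul_le_mul_right (ENNReal.inv_le_inv.mpr (by exact_mod_cast Nat.succ_le_succ hnk)) _
  have hI : (⋂ n : ℕ, {x | c n < dq P Q x}) = {x | thr P Q m ≤ dq P Q x} := by
    ext x
    simp only [mem_iInter, mem_setOf_eq]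
    constructor
    · intro hx
      by_contra hlt
      push_neg at hlt
      obtain ⟨n, hn⟩ := ENNReal.exists_inv_nat_lt (show thr P Q m - dq P Q x ≠ 0 by
        simpa using (tsub_pos_of_lt hlt).ne')
      have hb : dq P Q x + thr P Q m * (((n:ℕ)+1 : ℕ) : ℝ≥0∞)⁻¹ ≤ thr P Q m := by
        calc dq P Q x + thr P Q m * (((n:ℕ)+1 : ℕ) : ℝ≥0∞)⁻¹
            ≤ dq P Q x + (thr P Q m - dq P Q x) := by
              refine add_le_add le_rfl ?_
              refine le_trans ?_ hn.le
              calc thr P Q m * (((n:ℕ)+1 : ℕ) : ℝ≥0∞)⁻¹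
                  ≤ 1 * (((n:ℕ)+1 : ℕ) : ℝ≥0∞)⁻¹ :=
                    mul_le_mul_left (thr_le_one P Q hm0.le) _
                _ = (((n:ℕ)+1 : ℕ) : ℝ≥0∞)⁻¹ := one_mul _
                _ ≤ ((n:ℕ) : ℝ≥0∞)⁻¹ := ENNReal.inv_le_inv.mpr (by exact_mod_cast Nat.le_succ n)
          _ = thr P Q m := add_tsub_cancel_of_le hlt.le
      have := ENNReal.le_sub_of_add_le_right (ENNReal.mul_ne_top (thr_ne_top P Q hm0.le) (by simp)) hb
      exact absurd (hx n) (not_lt.mpr this)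
    · intro hx n
      exact lt_of_lt_of_le (hclt n) hx
  calc ENNReal.ofReal m ≤ ⨅ n, P {x | c n < dq P Q x} := le_iInf hgt
    _ = P (⋂ n, {x | c n < dq P Q x}) :=
        (hanti.measure_iInter (fun n => (measurableSet_gt P Q _).nullMeasurableSet)
          ⟨0, measure_ne_top _ _⟩).symm
    _ = _ := by rw [hI]


lemma thrSet_mono {m m' : ℝ} (h : m ≤ m') : thrSet P Q m ⊆ thrSet P Q m' :=
  fun c hc => le_trans hc (ENNReal.ofReal_le_ofReal h)

lemma thr_anti {m m' : ℝ} (h : m ≤ m') : thr P Q m' ≤ thr P Q m :=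
  sInf_le_sInf (thrSet_mono P Q h)

/-- boundary randomization probability. -/
noncomputable def gam (m : ℝ) : ℝ :=
  if P {x | dq P Q x = thr P Q m} = 0 then 1
  else (m - (P {x | thr P Q m < dq P Q x}).toReal) / (P {x | dq P Q x = thr P Q m}).toReal

/-- the Neyman–Pearson test at level `m`. -/
noncomputable def np (m : ℝ) : Ω → ℝ := fun x =>
  Set.indicator {x | thr P Q m < dq P Q x} 1 x
  + gam P Q m * Set.indicator {x | dq P Q x = thr P Q m} 1 x

lemma np_apply (m : ℝ) (x : Ω) : np P Q m x =
    Set.indicator {x | thr P Q m < dq P Q x} 1 x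
    + gam P Q m * Set.indicator {x | dq P Q x = thr P Q m} 1 x := rfl

lemma np_eval_lt {m : ℝ} {x : Ω} (h : dq P Q x < thr P Q m) : np P Q m x = 0 := by
  rw [np_apply, Set.indicator_of_notMem (by simp [not_lt, h.le]),
    Set.indicator_of_notMem (by simp [h.ne])]
  simp

lemma np_eval_eq {m : ℝ} {x : Ω} (h : dq P Q x = thr P Q m) : np P Q m x = gam P Q m := by
  rw [np_apply, Set.indicator_of_notMem (by simp [not_lt, h.le]),
    Set.indicator_of_mem (by simp [h])]
  simp

lemma np_eval_gt {m : ℝ} {x : Ω} (h : thr P Q m < dq P Q x) : np P Q m x = 1 := by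
  rw [np_apply, Set.indicator_of_mem (by simp [h]), Set.indicator_of_notMem (by simp [h.ne'])]
  simp

lemma ge_eq_union (m : ℝ) : {x | thr P Q m ≤ dq P Q x}
    = {x | thr P Q m < dq P Q x} ∪ {x | dq P Q x = thr P Q m} := by
  ext x; simp only [mem_setOf_eq, mem_union]
  constructor
  · intro h; rcases eq_or_lt_of_le h with h | h
    · exact Or.inr h.symm
    · exact Or.inl h
  · rintro (h | h); exacts [h.le, h.ge]

lemma measure_ge_split (m : ℝ) : P {x | thr P Q m ≤ dq P Q x}
    = P {x | thr P Q m < dq P Q x} + P {x | dq P Q x = thr P Q m} := by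
  rw [ge_eq_union]
  refine measure_union ?_ (measurableSet_eq_c P Q _)
  rw [Set.disjoint_iff]
  rintro x ⟨h1, h2⟩
  exact absurd (mem_setOf_eq ▸ h2) (ne_of_gt h1)

lemma PA_le {m : ℝ} (hm : 0 ≤ m) : (P {x | thr P Q m < dq P Q x}).toReal ≤ m :=
  ENNReal.toReal_le_of_le_ofReal hm (measure_gt_thr_le P Q hm)

lemma le_PAB {m : ℝ} (hm : m ∈ Icc (0:ℝ) 1) :
    m ≤ (P {x | thr P Q m < dq P Q x}).toReal + (P {x | dq P Q x = thr P Q m}).toReal := by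
  have h := measure_ge_thr P Q hm.2
  rw [measure_ge_split] at h
  have := (ENNReal.ofReal_le_iff_le_toReal (by
    exact ENNReal.add_ne_top.mpr ⟨measure_ne_top _ _, measure_ne_top _ _⟩)).mp h
  rwa [ENNReal.toReal_add (measure_ne_top _ _) (measure_ne_top _ _)] at this

lemma gam_mem {m : ℝ} (hm : m ∈ Icc (0:ℝ) 1) : gam P Q m ∈ Icc (0:ℝ) 1 := by
  rw [gam]
  split_ifs with h
  · exact ⟨zero_le_one, le_refl 1⟩
  constructor
  · apply div_nonneg _ ENNReal.toReal_nonneg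
    linarith [PA_le P Q hm.1]
  · rw [div_le_one (by
      have := ENNReal.toReal_ne_zero.mpr ⟨h, measure_ne_top _ _⟩
      cases (ENNReal.toReal_nonneg (a := P {x | dq P Q x = thr P Q m})).lt_or_eq with
      | inl h' => exact h'
      | inr h' => exact absurd h'.symm this)]
    linarith [le_PAB P Q hm]

lemma np_meas (m : ℝ) : Measurable (np P Q m) := by
  refine Measurable.add ?_ (Measurable.const_mul ?_ _)
  · exact (measurable_const.indicator (measurableSet_gt P Q _))
  · exact (measurable_const.indicator (measurableSet_eq_c P Q _))

lemma np_mem {m : ℝ} (hm : m ∈ Icc (0:ℝ) 1) (x : Ω) : np P Q m x ∈ Icc (0:ℝ) 1 := by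
  rcases lt_trichotomy (dq P Q x) (thr P Q m) with h | h | h
  · rw [np_eval_lt P Q h]; exact ⟨le_refl _, zero_le_one⟩
  · rw [np_eval_eq P Q h]; exact gam_mem P Q hm
  · rw [np_eval_gt P Q h]; exact ⟨zero_le_one, le_refl _⟩

lemma integrable_indicator_one' (μ : Measure Ω) [IsFiniteMeasure μ] {s : Set Ω}
    (hs : MeasurableSet s) : Integrable (fun x => Set.indicator s (1 : Ω → ℝ) x) μ := by
  refine test_integrable μ (measurable_const.indicator hs) fun x => ?_
  by_cases hx : x ∈ s
  · simp [Set.indicator_of_mem hx]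
  · simp [Set.indicator_of_notMem hx]

lemma integral_np (μ : Measure Ω) [IsFiniteMeasure μ] (m : ℝ) :
    ∫ x, np P Q m x ∂μ = (μ {x | thr P Q m < dq P Q x}).toReal
      + gam P Q m * (μ {x | dq P Q x = thr P Q m}).toReal := by
  show ∫ x, (Set.indicator {x | thr P Q m < dq P Q x} 1 x
      + gam P Q m * Set.indicator {x | dq P Q x = thr P Q m} 1 x) ∂μ = _
  rw [integral_add (integrable_indicator_one' μ (measurableSet_gt P Q _))
    ((integrable_indicator_one' μ (measurableSet_eq_c P Q _)).const_mul _),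
    integral_const_mul, integral_indicator_one (measurableSet_gt P Q _),
    integral_indicator_one (measurableSet_eq_c P Q _)]
  rfl

lemma integral_np_P {m : ℝ} (hm : m ∈ Icc (0:ℝ) 1) : ∫ x, np P Q m x ∂P = m := by
  rw [integral_np]
  by_cases h : P {x | dq P Q x = thr P Q m} = 0
  · rw [gam, if_pos h, h]
    have h1 : P {x | thr P Q m < dq P Q x} ≤ ENNReal.ofReal m := measure_gt_thr_le P Q hm.1
    have h2 := measure_ge_thr P Q hm.2
    rw [measure_ge_split, h, add_zero] at h2
    have : P {x | thr P Q m < dq P Q x} = ENNReal.ofReal m := le_antisymm h1 h2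
    rw [this, ENNReal.toReal_ofReal hm.1]
    simp
  · rw [gam, if_neg h]
    have hne : (P {x | dq P Q x = thr P Q m}).toReal ≠ 0 :=
      ENNReal.toReal_ne_zero.mpr ⟨h, measure_ne_top _ _⟩
    field_simp
    ring

lemma np_nonneg {m : ℝ} (hm : m ∈ Icc (0:ℝ) 1) (x : Ω) : 0 ≤ np P Q m x :=
  (np_mem P Q hm x).1

lemma np_mono {m m' : ℝ} (hm : m ∈ Icc (0:ℝ) 1) (hm' : m' ∈ Icc (0:ℝ) 1) (h : m ≤ m')
    (x : Ω) : np P Q m x ≤ np P Q m' x := by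
  have hthr : thr P Q m' ≤ thr P Q m := thr_anti P Q h
  rcases eq_or_lt_of_le hthr with heq | hlt
  · rcases lt_trichotomy (dq P Q x) (thr P Q m) with h1 | h1 | h1
    · rw [np_eval_lt P Q h1]; exact np_nonneg P Q hm' x
    · rw [np_eval_eq P Q h1, np_eval_eq P Q (heq ▸ h1)]
      -- gam m ≤ gam m'
      rw [gam, gam, heq]
      split_ifs with hPB
      · exact le_refl 1
      · have hpos : 0 < (P {x | dq P Q x = thr P Q m}).toReal := by
          have := ENNReal.toReal_ne_zero.mpr ⟨hPB, measure_ne_top (μ := P) _⟩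
          cases (ENNReal.toReal_nonneg (a := P {x | dq P Q x = thr P Q m})).lt_or_eq with
          | inl h' => exact h'
          | inr h' => exact absurd h'.symm this
        exact (div_le_div_iff_of_pos_right hpos).mpr (by linarith)
    · rw [np_eval_gt P Q h1, np_eval_gt P Q (lt_of_le_of_lt hthr h1)]
  · rcases lt_trichotomy (dq P Q x) (thr P Q m) with h1 | h1 | h1
    · rw [np_eval_lt P Q h1]; exact np_nonneg P Q hm' x
    · rw [np_eval_eq P Q h1, np_eval_gt P Q (h1 ▸ hlt)]
      exact (gam_mem P Q hm).2
    · rw [np_eval_gt P Q h1, np_eval_gt P Q (lt_trans hlt h1)]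


/-- Integral against `Q` as a density integral against `P + Q`. -/
lemma integral_Q (f : Ω → ℝ) :
    ∫ x, f x ∂Q = ∫ x, (dq P Q x).toReal * f x ∂(P + Q) := by
  conv_lhs => rw [← Q_eq_withDensity P Q]
  have h1 : (P + Q).withDensity (dq P Q)
      = (P + Q).withDensity (fun x => ((dq P Q x).toNNReal : ℝ≥0∞)) := by
    refine withDensity_congr_ae ?_
    filter_upwards [Measure.rnDeriv_lt_top Q (P + Q)] with x hx
    exact (ENNReal.coe_toNNReal hx.ne).symm
  rw [h1, integral_withDensity_eq_integral_smul (dq_meas P Q).ennreal_toNNReal f]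
  congr 1

lemma P_eq_one_null : P {x | dq P Q x = 1} = 0 := by
  set A := {x | dq P Q x = 1} with hA
  have hAm : MeasurableSet A := measurableSet_eq_c P Q 1
  have hQ : Q A = (P + Q) A := by
    conv_lhs => rw [← Q_eq_withDensity P Q]
    rw [withDensity_apply _ hAm]
    calc ∫⁻ x in A, dq P Q x ∂(P + Q) = ∫⁻ x in A, 1 ∂(P + Q) := by
          refine setLIntegral_congr_fun hAm (fun x hx => hx)
      _ = (P + Q) A := by simp
  rw [Measure.add_apply] at hQ
  have h0 : P A + Q A = 0 + Q A := by rw [zero_add, ← hQ]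
  exact (ENNReal.add_left_inj (measure_ne_top Q A)).mp h0

lemma np_opt {m : ℝ} (hm : m ∈ Icc (0:ℝ) 1) {φ : Ω → ℝ} (hφm : Measurable φ)
    (hφb : ∀ x, φ x ∈ Icc (0:ℝ) 1) (hφl : ∫ x, φ x ∂P ≤ m) :
    ∫ x, φ x ∂Q ≤ ∫ x, np P Q m x ∂Q := by
  have hcle : thr P Q m ≤ 1 := thr_le_one P Q hm.1
  rcases lt_or_eq_of_le hcle with hclt | hceq
  · -- main case : threshold < 1
    set c := thr P Q m with hc
    set ct := c.toReal with hct
    have hcne : c ≠ ∞ := thr_ne_top P Q hm.1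
    have hctlt : ct < 1 := by
      have := (ENNReal.toReal_lt_toReal hcne (by simp : (1:ℝ≥0∞) ≠ ∞)).mpr hclt
      simpa using this
    have hct0 : (0:ℝ) ≤ ct := ENNReal.toReal_nonneg
    set D := fun x => np P Q m x - φ x with hD
    have hDmeas : Measurable D := (np_meas P Q m).sub hφm
    have hDb : ∀ x, |D x| ≤ 1 := by
      intro x
      have h1 := np_mem P Q hm x
      have h2 := hφb x
      show |np P Q m x - φ x| ≤ 1
      rw [abs_le]
      constructor
      · linarith [h1.1, h2.2]
      · linarith [h1.2, h2.1]
    have hDint : ∀ (μ : Measure Ω) [IsFiniteMeasure μ], Integrable D μ := by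
      intro μ _
      refine (integrable_const (1:ℝ)).mono' hDmeas.aestronglyMeasurable ?_
      exact Eventually.of_forall fun x => by simpa using hDb x
    have hkey : 0 ≤ ∫ x, ((dq P Q x).toReal - ct) * D x ∂(P + Q) := by
      refine integral_nonneg_of_ae ?_
      filter_upwards [dq_le_one P Q] with x hx
      simp only [Pi.zero_apply]
      have hxne : dq P Q x ≠ ∞ := ne_top_of_le_ne_top (by simp) hx
      rcases lt_trichotomy (dq P Q x) c with h1 | h1 | h1
      · have hnp : np P Q m x = 0 := np_eval_lt P Q h1
        have hfac : (dq P Q x).toReal - ct ≤ 0 := by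
          have := (ENNReal.toReal_le_toReal hxne hcne).mpr h1.le
          linarith
        have hDx : D x ≤ 0 := by
          show np P Q m x - φ x ≤ 0
          rw [hnp]
          linarith [(hφb x).1]
        nlinarith [hfac, hDx]
      · have hfac : (dq P Q x).toReal - ct = 0 := by rw [h1]; ring
        rw [hfac, zero_mul]
      · have hnp : np P Q m x = 1 := np_eval_gt P Q h1
        have hfac : (0:ℝ) ≤ (dq P Q x).toReal - ct := by
          have := (ENNReal.toReal_le_toReal hcne hxne).mpr h1.le
          linarith
        have hDx : 0 ≤ D x := by
          show 0 ≤ np P Q m x - φ x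
          rw [hnp]
          linarith [(hφb x).2]
        exact mul_nonneg hfac hDx
    have hint1 : Integrable (fun x => (dq P Q x).toReal * D x) (P + Q) := by
      refine (integrable_const (1:ℝ)).mono'
        ((dq_meas P Q).ennreal_toReal.mul hDmeas).aestronglyMeasurable ?_
      filter_upwards [dq_le_one P Q] with x hx
      have h1 : (dq P Q x).toReal ≤ 1 := by
        calc (dq P Q x).toReal ≤ (1:ℝ≥0∞).toReal :=
          ENNReal.toReal_mono (by simp) hx
        _ = 1 := by simp
      rw [norm_mul, Real.norm_eq_abs, Real.norm_eq_abs,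
        abs_of_nonneg (ENNReal.toReal_nonneg)]
      calc (dq P Q x).toReal * |D x| ≤ 1 * 1 :=
        mul_le_mul h1 (hDb x) (abs_nonneg _) zero_le_one
      _ = 1 := by ring
    have hsplit : ∫ x, ((dq P Q x).toReal - ct) * D x ∂(P + Q)
        = ∫ x, D x ∂Q - ct * (∫ x, D x ∂P + ∫ x, D x ∂Q) := by
      have h1 : ∫ x, (dq P Q x).toReal * D x ∂(P + Q) = ∫ x, D x ∂Q := (integral_Q P Q D).symm
      have h2 : ∫ x, D x ∂(P + Q) = ∫ x, D x ∂P + ∫ x, D x ∂Q :=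
        integral_add_measure (hDint P) (hDint Q)
      rw [show (fun x => ((dq P Q x).toReal - ct) * D x)
          = fun x => (dq P Q x).toReal * D x - ct * D x from funext fun x => by ring]
      rw [integral_sub hint1 ((hDint (P+Q)).const_mul ct), h1, integral_const_mul, h2]
    have hDP : 0 ≤ ∫ x, D x ∂P := by
      have := integral_sub (test_integrable P (np_meas P Q m) (np_mem P Q hm))
        (test_integrable P hφm hφb)
      rw [hD]
      rw [this, integral_np_P P Q hm]
      linarith
    have hDQ : 0 ≤ ∫ x, D x ∂Q := by
      rw [hsplit] at hkey
      nlinarith [mul_nonneg hct0 hDP]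
    have hfin := integral_sub (test_integrable Q (np_meas P Q m) (np_mem P Q hm))
      (test_integrable Q hφm hφb)
    rw [hD] at hDQ
    rw [hfin] at hDQ
    linarith
  · -- degenerate case : threshold = 1
    have hP1 : P {x | thr P Q m ≤ dq P Q x} = 0 := by
      have hsp := measure_ge_split P Q m
      rw [hceq] at hsp ⊢
      rw [hsp, P_gt_one_null P Q, P_eq_one_null P Q, add_zero]
    have hm0 : m ≤ 0 := by
      have := (measure_ge_thr P Q hm.2).trans_eq hP1
      simpa using this
    have hmeq : m = 0 := le_antisymm hm0 hm.1
    have hφP0 : ∫ x, φ x ∂P = 0 :=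
      le_antisymm (hφl.trans hm0) (integral_nonneg fun x => (hφb x).1)
    have hφ0 : φ =ᵐ[P] 0 :=
      (integral_eq_zero_iff_of_nonneg (fun x => (hφb x).1)
        (test_integrable P hφm hφb)).mp hφP0
    set E := {x | φ x ≠ 0} with hE
    have hEm : MeasurableSet E := (hφm (measurableSet_singleton 0)).compl
    have hPE : P E = 0 := by
      have h := hφ0
      rw [Filter.EventuallyEq, ae_iff] at h
      simpa [hE] using h
    -- Q gives no mass to E below the threshold
    set A := E ∩ {x | dq P Q x < 1} with hA
    have hAm : MeasurableSet A := hEm.inter (measurableSet_lt (dq_meas P Q) measurable_const)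
    have hPA : P A = 0 := le_antisymm ((measure_mono inter_subset_left).trans hPE.le) (zero_le)
    have hnuA : (P + Q) A = Q A := by rw [Measure.add_apply, hPA, zero_add]
    have hQA : Q A = ∫⁻ x in A, dq P Q x ∂(P + Q) := by
      conv_lhs => rw [← Q_eq_withDensity P Q]
      rw [withDensity_apply _ hAm]
    have hsub : ∫⁻ x in A, (1 - dq P Q x) ∂(P + Q) = 0 := by
      rw [lintegral_sub (dq_meas P Q) (by rw [← hQA]; exact measure_ne_top _ _)
        (ae_restrict_of_ae (dq_le_one P Q))]
      rw [← hQA, lintegral_one, Measure.restrict_apply_univ, hnuA]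
      simp
    have hnuA0 : (P + Q) A = 0 := by
      have h0 := (lintegral_eq_zero_iff ((measurable_const.sub (dq_meas P Q)))).mp hsub
      have hmem := ae_restrict_mem (μ := P + Q) hAm
      have hfalse : ∀ᵐ x ∂(P + Q).restrict A, False := by
        filter_upwards [h0, hmem] with x h0x hmemx
        have : dq P Q x < 1 := hmemx.2
        have : (0:ℝ≥0∞) < 1 - dq P Q x := tsub_pos_of_lt this
        exact absurd h0x (by simpa using this.ne')
      have : (P + Q).restrict A = 0 := ae_eq_bot.mp (by
        rwa [← Filter.eventually_false_iff_eq_bot])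
      calc (P + Q) A = (P + Q).restrict A univ := (Measure.restrict_apply_univ A).symm
      _ = 0 := by rw [this]; simp
    have hQA0 : Q A = 0 := by
      rw [← hnuA]
      exact hnuA0
    -- conclude
    have h1 : ∫ x, φ x ∂Q ≤ (Q E).toReal := by
      have : ∀ x, φ x ≤ Set.indicator E 1 x := by
        intro x
        by_cases hx : x ∈ E
        · rw [Set.indicator_of_mem hx]; exact (hφb x).2
        · rw [Set.indicator_of_notMem hx]
          simp only [hE, mem_setOf_eq, not_not] at hx
          rw [hx]
      calc ∫ x, φ x ∂Q ≤ ∫ x, Set.indicator E 1 x ∂Q :=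
            integral_mono (test_integrable Q hφm hφb)
              (test_integrable Q (measurable_const.indicator hEm) (fun x => by
                by_cases hx : x ∈ E
                · simp [Set.indicator_of_mem hx]
                · simp [Set.indicator_of_notMem hx])) this
        _ = (Q E).toReal := integral_indicator_one hEm
    have h2 : Q E ≤ Q {x | 1 ≤ dq P Q x} := by
      have hsubset : E ⊆ A ∪ {x | 1 ≤ dq P Q x} := by
        intro x hx
        rcases lt_or_ge (dq P Q x) 1 with h | h
        · exact Or.inl ⟨hx, h⟩
        · exact Or.inr h
      calc Q E ≤ Q (A ∪ {x | 1 ≤ dq P Q x}) := measure_mono hsubset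
        _ ≤ Q A + Q {x | 1 ≤ dq P Q x} := measure_union_le _ _
        _ = Q {x | 1 ≤ dq P Q x} := by rw [hQA0, zero_add]
    have h3 : (Q {x | 1 ≤ dq P Q x}).toReal ≤ ∫ x, np P Q m x ∂Q := by
      have hpt : ∀ x, Set.indicator {x | 1 ≤ dq P Q x} 1 x ≤ np P Q m x := by
        intro x
        by_cases hx : x ∈ {x | 1 ≤ dq P Q x}
        · rw [Set.indicator_of_mem hx]
          rcases lt_or_eq_of_le (show (1:ℝ≥0∞) ≤ dq P Q x from hx) with h | h
          · rw [np_eval_gt P Q (by rw [← hceq] at h; exact h)]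
            simp
          · rw [np_eval_eq P Q (by rw [← h, hceq])]
            have : gam P Q m = 1 := by
              rw [gam, if_pos (by
                have : {x | dq P Q x = thr P Q m} = {x | dq P Q x = 1} := by rw [← hceq]
                rw [this]
                exact P_eq_one_null P Q)]
            rw [this]
            simp
        · rw [Set.indicator_of_notMem hx]
          exact (np_mem P Q hm x).1
      calc (Q {x | 1 ≤ dq P Q x}).toReal
          = ∫ x, Set.indicator {x | 1 ≤ dq P Q x} 1 x ∂Q :=
            (integral_indicator_one (measurableSet_le measurable_const (dq_meas P Q))).symm
        _ ≤ ∫ x, np P Q m x ∂Q := integral_mono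
            (test_integrable Q (measurable_const.indicator
              (measurableSet_le measurable_const (dq_meas P Q))) (fun x => by
                by_cases hx : x ∈ {x | 1 ≤ dq P Q x}
                · simp [Set.indicator_of_mem hx]
                · simp [Set.indicator_of_notMem hx]))
            (test_integrable Q (np_meas P Q m) (np_mem P Q hm)) hpt
    calc ∫ x, φ x ∂Q ≤ (Q E).toReal := h1
      _ ≤ (Q {x | 1 ≤ dq P Q x}).toReal := ENNReal.toReal_mono (measure_ne_top _ _) h2
      _ ≤ ∫ x, np P Q m x ∂Q := h3


end NP
end FDP
-- main theorem part, to be appended to lib.lean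
namespace FDP

lemma abel (e t : ℕ → ℝ) (N : ℕ) :
    ∑ i ∈ Finset.range (N+1), (e i - e (i+1)) * t i
      = e 0 * t 0 - e (N+1) * t N
        + ∑ i ∈ Finset.range N, e (i+1) * (t (i+1) - t i) := by
  induction N with
  | zero => simp; ring
  | succ N ih =>
    rw [Finset.sum_range_succ, ih, Finset.sum_range_succ]
    ring

end FDP

theorem stmt_2 {Y Z Ω₁ Ω₂ : Type*} [MeasurableSpace Y] [MeasurableSpace Z]
    [MeasurableSpace Ω₁] [MeasurableSpace Ω₂]
    (μ₁ μ₁' : Measure Y) [IsProbabilityMeasure μ₁] [IsProbabilityMeasure μ₁']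
    (κ κ' : Kernel Y Z) [IsMarkovKernel κ] [IsMarkovKernel κ']
    (P Q : Measure Ω₁) [IsProbabilityMeasure P] [IsProbabilityMeasure Q]
    (P' Q' : Measure Ω₂) [IsProbabilityMeasure P'] [IsProbabilityMeasure Q']
    (h1 : ∀ α ∈ Set.Icc (0:ℝ) 1, tradeOff P Q α ≤ tradeOff μ₁ μ₁' α)
    (h2 : ∀ y : Y, ∀ α ∈ Set.Icc (0:ℝ) 1, tradeOff P' Q' α ≤ tradeOff (κ y) (κ' y) α) :
    ∀ α ∈ Set.Icc (0:ℝ) 1,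
      tradeOff (P.prod P') (Q.prod Q') α ≤ tradeOff (μ₁ ⊗ₘ κ) (μ₁' ⊗ₘ κ') α := by
  intro α hα
  conv_rhs => rw [FDP.tradeOff_eq]
  refine le_csInf (FDP.TOSet_nonempty _ _ hα.1) ?_
  rintro b ⟨φ, hφm, hφb, hφl, rfl⟩
  refine le_of_forall_pos_le_add fun δ hδ => ?_
  -- basic objects
  set a : Y → ℝ := fun y => ∫ z, φ (y, z) ∂(κ y) with ha
  set bf : Y → ℝ := fun y => ∫ z, φ (y, z) ∂(κ' y) with hbf
  have haM : Measurable a :=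
    (hφm.stronglyMeasurable.integral_kernel_prod_right' (κ := κ)).measurable
  have hbM : Measurable bf :=
    (hφm.stronglyMeasurable.integral_kernel_prod_right' (κ := κ')).measurable
  have hsec : ∀ y : Y, Measurable (fun z => φ (y, z)) :=
    fun y => hφm.comp measurable_prodMk_left
  have ha_mem : ∀ y, a y ∈ Icc (0:ℝ) 1 := fun y =>
    ⟨FDP.test_integral_nonneg (κ y) (fun z => hφb (y, z)),
      FDP.test_integral_le_one (κ y) (hsec y) (fun z => hφb (y, z))⟩
  have hb_mem : ∀ y, bf y ∈ Icc (0:ℝ) 1 := fun y =>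
    ⟨FDP.test_integral_nonneg (κ' y) (fun z => hφb (y, z)),
      FDP.test_integral_le_one (κ' y) (hsec y) (fun z => hφb (y, z))⟩
  have hal : ∫ y, a y ∂μ₁ ≤ α := by
    rw [← Measure.integral_compProd (FDP.test_integrable _ hφm hφb)]
    exact hφl
  have hpowφ : ∫ x, φ x ∂(μ₁' ⊗ₘ κ') = ∫ y, bf y ∂μ₁' :=
    Measure.integral_compProd (FDP.test_integrable _ hφm hφb)
  have hble : ∀ y, bf y ≤ 1 - tradeOff P' Q' (a y) := by
    intro y
    have hl := FDP.tradeOff_le (κ y) (κ' y) (hsec y) (fun z => hφb (y, z))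
      (le_refl (a y))
    have := h2 y (a y) (ha_mem y)
    simp only [hbf]
    linarith
  have gt_mono : ∀ {s t : ℝ}, 0 ≤ s → s ≤ t →
      1 - tradeOff P' Q' s ≤ 1 - tradeOff P' Q' t := by
    intro s t hs hst
    have := FDP.tradeOff_anti P' Q' hs hst
    linarith
  have gt_nonneg : ∀ {t : ℝ}, 0 ≤ t → 0 ≤ 1 - tradeOff P' Q' t := by
    intro t ht
    have := FDP.tradeOff_le_one P' Q' ht
    linarith
  have gt_le_one : ∀ t : ℝ, 1 - tradeOff P' Q' t ≤ 1 := by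
    intro t
    have := FDP.tradeOff_nonneg P' Q' t
    linarith
  have hbf_int : Integrable bf μ₁' := FDP.test_integrable μ₁' hbM hb_mem
  have ha_int : Integrable a μ₁ := FDP.test_integrable μ₁ haM ha_mem
  rcases eq_or_lt_of_le hα.1 with hα0 | hα0
  · -- α = 0 case
    obtain ⟨χ0, hχ0m, hχ0b, hχ0l, hχ0p⟩ := FDP.exists_test_near P' Q' (le_refl (0:ℝ)) hδ
    set W0 := FDP.np P Q 0 with hW0def
    have h0mem : (0:ℝ) ∈ Icc (0:ℝ) 1 := ⟨le_refl 0, zero_le_one⟩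
    have hW0m : Measurable W0 := FDP.np_meas P Q 0
    have hW0b : ∀ x, W0 x ∈ Icc (0:ℝ) 1 := FDP.np_mem P Q h0mem
    set ψ : Ω₁ × Ω₂ → ℝ := fun p => W0 p.1 + (1 - W0 p.1) * χ0 p.2 with hψdef
    have hψm : Measurable ψ :=
      ((hW0m.comp measurable_fst).add
        ((measurable_const.sub (hW0m.comp measurable_fst)).mul (hχ0m.comp measurable_snd)))
    have hψb : ∀ p, ψ p ∈ Icc (0:ℝ) 1 := by
      intro p
      have h1' := hW0b p.1
      have h2' := hχ0b p.2
      show W0 p.1 + (1 - W0 p.1) * χ0 p.2 ∈ Icc (0:ℝ) 1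
      constructor
      · have : 0 ≤ (1 - W0 p.1) * χ0 p.2 := mul_nonneg (by linarith [h1'.2]) h2'.1
        linarith [h1'.1]
      · nlinarith [h1'.1, h1'.2, h2'.1, h2'.2]
    have hprodsplit : ∀ (m₁ : Measure Ω₁) (m₂ : Measure Ω₂), IsProbabilityMeasure m₁ →
        IsProbabilityMeasure m₂ →
        ∫ p, ψ p ∂(m₁.prod m₂)
          = ∫ x, W0 x ∂m₁ + (1 - ∫ x, W0 x ∂m₁) * ∫ z, χ0 z ∂m₂ := by
      intro m₁ m₂ hm₁ hm₂
      haveI := hm₁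
      haveI := hm₂
      have hint1 : Integrable (fun p : Ω₁ × Ω₂ => W0 p.1) (m₁.prod m₂) :=
        FDP.test_integrable _ (hW0m.comp measurable_fst) (fun p => hW0b p.1)
      have hint2 : Integrable (fun p : Ω₁ × Ω₂ => (1 - W0 p.1) * χ0 p.2) (m₁.prod m₂) := by
        refine FDP.test_integrable _
          ((measurable_const.sub (hW0m.comp measurable_fst)).mul (hχ0m.comp measurable_snd)) ?_
        intro p
        have h1' := hW0b p.1
        have h2' := hχ0b p.2
        constructor
        · exact mul_nonneg (by linarith [h1'.2]) h2'.1
        · nlinarith [h1'.1, h1'.2, h2'.1, h2'.2]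
      have e1 : ∫ p : Ω₁ × Ω₂, W0 p.1 ∂(m₁.prod m₂) = ∫ x, W0 x ∂m₁ := by
        simpa using integral_prod_mul (μ := m₁) (ν := m₂) W0 (fun _ : Ω₂ => (1:ℝ))
      have e2 : ∫ p : Ω₁ × Ω₂, (1 - W0 p.1) * χ0 p.2 ∂(m₁.prod m₂)
          = (1 - ∫ x, W0 x ∂m₁) * ∫ z, χ0 z ∂m₂ := by
        have h := integral_prod_mul (μ := m₁) (ν := m₂) (fun x => (1:ℝ) - W0 x) χ0
        rw [h, integral_sub (integrable_const 1) (FDP.test_integrable _ hW0m hW0b)]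
        simp
      calc ∫ p, ψ p ∂(m₁.prod m₂)
          = (∫ p : Ω₁ × Ω₂, W0 p.1 ∂(m₁.prod m₂))
            + ∫ p : Ω₁ × Ω₂, (1 - W0 p.1) * χ0 p.2 ∂(m₁.prod m₂) := integral_add hint1 hint2
        _ = ∫ x, W0 x ∂m₁ + (1 - ∫ x, W0 x ∂m₁) * ∫ z, χ0 z ∂m₂ := by rw [e1, e2]
    have hEP0 : ∫ x, W0 x ∂P = 0 := FDP.integral_np_P P Q h0mem
    have hlevel : ∫ p, ψ p ∂(P.prod P') ≤ α := by
      rw [hprodsplit P P' inferInstance inferInstance, hEP0]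
      have : ∫ z, χ0 z ∂P' ≤ 0 := hχ0l
      rw [← hα0]
      linarith
    -- power chain
    set C0 : Set Y := {y | 0 < a y} with hC0
    have hC0m : MeasurableSet C0 := measurableSet_lt measurable_const haM
    have haz : ∫ y, a y ∂μ₁ = 0 := le_antisymm (by rw [← hα0] at hal; exact hal)
      (integral_nonneg fun y => (ha_mem y).1)
    have hae : a =ᵐ[μ₁] 0 :=
      (integral_eq_zero_iff_of_nonneg (fun y => (ha_mem y).1) ha_int).mp haz
    have hμC0 : μ₁ C0 = 0 := by
      have h := hae
      rw [Filter.EventuallyEq, ae_iff] at h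
      refine le_antisymm (le_trans (measure_mono ?_) h.le) (zero_le)
      intro y hy
      simp only [mem_setOf_eq] at hy ⊢
      intro h0
      simp only [Pi.zero_apply] at h0
      exact absurd h0.symm (ne_of_lt hy)
    set M0' : ℝ := (μ₁' C0).toReal with hM0'
    have hM0'mem : M0' ∈ Icc (0:ℝ) 1 := by
      constructor
      · exact ENNReal.toReal_nonneg
      · rw [hM0']
        exact ENNReal.toReal_le_of_le_ofReal zero_le_one (by simpa using prob_le_one)
    have hindC0 : ∀ x, Set.indicator C0 (1 : Y → ℝ) x ∈ Icc (0:ℝ) 1 := by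
      intro x
      by_cases hx : x ∈ C0
      · simp [Set.indicator_of_mem hx]
      · simp [Set.indicator_of_notMem hx]
    have hIint : ∀ (m : Measure Y) [IsFiniteMeasure m],
        Integrable (fun y => Set.indicator C0 (1 : Y → ℝ) y) m := fun m _ =>
      FDP.test_integrable m (measurable_const.indicator hC0m) hindC0
    have hIone : ∀ (m : Measure Y), ∫ y, Set.indicator C0 (1 : Y → ℝ) y ∂m = (m C0).toReal :=
      fun m => integral_indicator_one hC0m
    have h1mi : ∀ (m : Measure Y) [IsFiniteMeasure m],
        Integrable (fun y => 1 - Set.indicator C0 (1 : Y → ℝ) y) m := by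
      intro m _
      exact (integrable_const (1:ℝ)).sub (hIint m)
    have hstep2 : tradeOff μ₁ μ₁' 0 ≤ 1 - M0' := by
      have h' := FDP.tradeOff_le μ₁ μ₁' (α := 0) (φ := fun y => Set.indicator C0 (1 : Y → ℝ) y)
        (measurable_const.indicator hC0m) hindC0 (by
          rw [hIone μ₁, hμC0]; simp)
      rw [hIone μ₁'] at h'
      exact h'
    have hstep4 : 1 - ∫ x, W0 x ∂Q ≤ tradeOff P Q 0 := by
      refine FDP.le_tradeOff P Q (le_refl 0) ?_
      intro φ' hφ'm hφ'b hφ'l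
      exact FDP.np_opt P Q h0mem hφ'm hφ'b hφ'l
    have hchain0 : M0' ≤ ∫ x, W0 x ∂Q := by
      have h13 := h1 0 h0mem
      linarith
    have hbfpt : ∀ y, bf y ≤ Set.indicator C0 (1 : Y → ℝ) y
        + (1 - tradeOff P' Q' 0) * (1 - Set.indicator C0 (1 : Y → ℝ) y) := by
      intro y
      by_cases hy : y ∈ C0
      · rw [Set.indicator_of_mem hy]
        simp only [Pi.one_apply]
        have := (hb_mem y).2
        nlinarith [gt_nonneg (le_refl (0:ℝ)), gt_le_one (0:ℝ)]
      · rw [Set.indicator_of_notMem hy]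
        have h0 : a y = 0 := le_antisymm (by simpa [hC0, not_lt] using hy) (ha_mem y).1
        have := hble y
        rw [h0] at this
        linarith
    have hbfint : ∫ y, bf y ∂μ₁' ≤ M0' + (1 - tradeOff P' Q' 0) * (1 - M0') := by
      have hInd : Integrable (fun y => Set.indicator C0 (1 : Y → ℝ) y
          + (1 - tradeOff P' Q' 0) * (1 - Set.indicator C0 (1 : Y → ℝ) y)) μ₁' :=
        Integrable.add (hIint μ₁') ((h1mi μ₁').const_mul _)
      calc ∫ y, bf y ∂μ₁' ≤ ∫ y, (Set.indicator C0 (1 : Y → ℝ) y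
          + (1 - tradeOff P' Q' 0) * (1 - Set.indicator C0 (1 : Y → ℝ) y)) ∂μ₁' :=
            integral_mono hbf_int hInd hbfpt
        _ = M0' + (1 - tradeOff P' Q' 0) * (1 - M0') := by
            rw [integral_add (hIint μ₁') ((h1mi μ₁').const_mul _),
              integral_const_mul,
              integral_sub (integrable_const 1) (hIint μ₁'),
              hIone μ₁', integral_const]
            simp [hM0']
    -- final comparison
    have hfinal := FDP.tradeOff_le (P.prod P') (Q.prod Q') hψm hψb hlevel
    have hpsiQ : ∫ p, ψ p ∂(Q.prod Q')
        = ∫ x, W0 x ∂Q + (1 - ∫ x, W0 x ∂Q) * ∫ z, χ0 z ∂Q' :=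
      hprodsplit Q Q' inferInstance inferInstance
    have hFQ1 : ∫ x, W0 x ∂Q ≤ 1 := FDP.test_integral_le_one Q hW0m hW0b
    have hg0 : 1 - tradeOff P' Q' 0 - δ ≤ ∫ z, χ0 z ∂Q' := hχ0p
    have hχQ'0 : 0 ≤ ∫ z, χ0 z ∂Q' := FDP.test_integral_nonneg Q' (fun z => (hχ0b z))
    have hpow_ge : ∫ y, bf y ∂μ₁' - δ ≤ ∫ p, ψ p ∂(Q.prod Q') := by
      rw [hpsiQ]
      have hF0 : 0 ≤ ∫ x, W0 x ∂Q := FDP.test_integral_nonneg Q hW0b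
      nlinarith [gt_nonneg (le_refl (0:ℝ)), gt_le_one (0:ℝ), hchain0, hbfint,
        hM0'mem.1, hM0'mem.2]
    rw [hpowφ]
    linarith
  · -- α > 0 case
    -- choose n
    obtain ⟨n, hn⟩ := exists_nat_gt (max 1 (2 / (α * δ)))
    have hn1 : (1:ℝ) ≤ n := le_of_lt (lt_of_le_of_lt (le_max_left _ _) hn)
    have hn0 : (0:ℝ) < n := lt_of_lt_of_le one_pos hn1
    have hnn : 2 / (α * δ) < n := lt_of_le_of_lt (le_max_right _ _) hn
    have hαδ : 0 < α * δ := mul_pos hα0 hδ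
    have hkey2 : 1 / ((n:ℝ) * α) ≤ δ / 2 := by
      rw [div_le_div_iff₀ (by positivity) (by norm_num)]
      have h2n : 2 < (n:ℝ) * (α * δ) := (div_lt_iff₀ hαδ).mp hnn
      nlinarith
    have hε2 : 0 < δ/2 := by positivity
    -- second-stage tests
    have hχex : ∀ i : ℕ, ∃ c : Ω₂ → ℝ, Measurable c ∧ (∀ x, c x ∈ Icc (0:ℝ) 1) ∧
        (∫ x, c x ∂P') ≤ (i:ℝ)/n ∧ 1 - tradeOff P' Q' ((i:ℝ)/n) - δ/2 ≤ ∫ x, c x ∂Q' :=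
      fun i => FDP.exists_test_near P' Q' (by positivity) hε2
    choose χ hχm hχb hχl hχp using hχex
    -- first-stage layers
    set C : ℕ → Set Y := fun i => {y | (i:ℝ)/n < a y} with hCset
    have hCm : ∀ i, MeasurableSet (C i) := fun i => measurableSet_lt measurable_const haM
    set M : ℕ → ℝ := fun i => (μ₁ (C i)).toReal with hMset
    set M' : ℕ → ℝ := fun i => (μ₁' (C i)).toReal with hM'set
    have hMmem : ∀ i, M i ∈ Icc (0:ℝ) 1 := fun i => ⟨ENNReal.toReal_nonneg,
      ENNReal.toReal_le_of_le_ofReal zero_le_one (by simpa using prob_le_one)⟩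
    have hM'nonneg : ∀ i, 0 ≤ M' i := fun i => ENNReal.toReal_nonneg
    have hCanti : ∀ i, C (i+1) ⊆ C i := by
      intro i y hy
      have hy' : ((i+1 : ℕ):ℝ)/n < a y := hy
      have hle : (i:ℝ)/n ≤ ((i+1 : ℕ):ℝ)/n :=
        (div_le_div_iff_of_pos_right hn0).mpr (by exact_mod_cast Nat.le_succ i)
      exact lt_of_le_of_lt hle hy'
    have hManti : ∀ i, M (i+1) ≤ M i := fun i =>
      ENNReal.toReal_mono (measure_ne_top _ _) (measure_mono (hCanti i))
    -- first-stage NP tests, organized in layers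
    set V : ℕ → Ω₁ → ℝ := fun i => if i < n then FDP.np P Q (M i) else fun _ => 0 with hVset
    set W : ℕ → Ω₁ → ℝ := fun i => if i = 0 then (fun _ => 1) else V (i-1) with hWset
    have hWsucc : ∀ i, W (i+1) = V i := fun i => by simp [hWset]
    have hW0' : W 0 = fun _ => 1 := by simp [hWset]
    have hVmem : ∀ i x, V i x ∈ Icc (0:ℝ) 1 := by
      intro i x
      by_cases h : i < n
      · simp only [hVset, if_pos h]
        exact FDP.np_mem P Q (hMmem i) x
      · simp only [hVset, if_neg h]
        exact ⟨le_refl 0, zero_le_one⟩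
    have hWmem : ∀ i x, W i x ∈ Icc (0:ℝ) 1 := by
      intro i x
      cases i with
      | zero => rw [hW0']; exact ⟨zero_le_one, le_refl 1⟩
      | succ j => rw [hWsucc]; exact hVmem j x
    have hVmeas : ∀ i, Measurable (V i) := by
      intro i
      by_cases h : i < n
      · simp only [hVset, if_pos h]; exact FDP.np_meas P Q (M i)
      · simp only [hVset, if_neg h]; exact measurable_const
    have hWmeas : ∀ i, Measurable (W i) := by
      intro i
      cases i with
      | zero => rw [hW0']; exact measurable_const
      | succ j => rw [hWsucc]; exact hVmeas j
    have hVmono : ∀ i x, V (i+1) x ≤ V i x := by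
      intro i x
      by_cases h : i+1 < n
      · have h' : i < n := Nat.lt_of_succ_lt h
        simp only [hVset, if_pos h, if_pos h']
        exact FDP.np_mono P Q (hMmem (i+1)) (hMmem i) (hManti i) x
      · by_cases h' : i < n
        · simp only [hVset, if_neg h, if_pos h']
          exact FDP.np_nonneg P Q (hMmem i) x
        · simp only [hVset, if_neg h, if_neg h']
          exact le_rfl
    have hWmono : ∀ i x, W (i+1) x ≤ W i x := by
      intro i x
      cases i with
      | zero => rw [hWsucc, hW0']; exact (hVmem 0 x).2
      | succ j =>
        rw [hWsucc, hWsucc]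
        exact hVmono j x
    have hWint : ∀ i (m : Measure Ω₁) [IsFiniteMeasure m], Integrable (W i) m :=
      fun i m _ => FDP.test_integrable m (hWmeas i) (hWmem i)
    have hVn0 : V n = fun _ => 0 := by simp [hVset]
    -- values of first-stage integrals
    have hEP0 : ∫ x, W 0 x ∂P = 1 := by rw [hW0']; simp
    have hEQ0 : ∫ x, W 0 x ∂Q = 1 := by rw [hW0']; simp
    have hEPsucc : ∀ i, i < n → ∫ x, W (i+1) x ∂P = M i := by
      intro i h
      rw [hWsucc]
      simp only [hVset, if_pos h]
      exact FDP.integral_np_P P Q (hMmem i)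
    have hEPtop : ∫ x, W (n+1) x ∂P = 0 := by rw [hWsucc, hVn0]; simp
    have hEQtop : ∫ x, W (n+1) x ∂Q = 0 := by rw [hWsucc, hVn0]; simp
    have hEPmono : ∀ i, ∫ x, W (i+1) x ∂P ≤ ∫ x, W i x ∂P := fun i =>
      integral_mono (hWint (i+1) P) (hWint i P) (hWmono i)
    have hEQmono : ∀ i, ∫ x, W (i+1) x ∂Q ≤ ∫ x, W i x ∂Q := fun i =>
      integral_mono (hWint (i+1) Q) (hWint i Q) (hWmono i)
    -- indicator tools
    have hind_mem : ∀ i, ∀ y : Y, Set.indicator (C i) (1 : Y → ℝ) y ∈ Icc (0:ℝ) 1 := by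
      intro i y
      by_cases hy : y ∈ C i
      · simp [Set.indicator_of_mem hy]
      · simp [Set.indicator_of_notMem hy]
    have hind_int : ∀ i (m : Measure Y) [IsFiniteMeasure m],
        Integrable (fun y => Set.indicator (C i) (1 : Y → ℝ) y) m := fun i m _ =>
      FDP.test_integrable m (measurable_const.indicator (hCm i)) (hind_mem i)
    have hind_val : ∀ i (m : Measure Y),
        ∫ y, Set.indicator (C i) (1 : Y → ℝ) y ∂m = (m (C i)).toReal :=
      fun i m => integral_indicator_one (hCm i)
    -- domination chain : M' i ≤ ∫ W (i+1) dQ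
    have hchain : ∀ i, i < n → M' i ≤ ∫ x, W (i+1) x ∂Q := by
      intro i h
      have hs2 : tradeOff μ₁ μ₁' (M i) ≤ 1 - M' i := by
        have h' := FDP.tradeOff_le μ₁ μ₁' (α := M i)
          (φ := fun y => Set.indicator (C i) (1 : Y → ℝ) y)
          (measurable_const.indicator (hCm i)) (hind_mem i)
          (by rw [hind_val i μ₁])
        rwa [hind_val i μ₁'] at h'
      have hs3 := h1 (M i) (hMmem i)
      have hs4 : 1 - ∫ x, W (i+1) x ∂Q ≤ tradeOff P Q (M i) := by
        rw [hWsucc]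
        simp only [hVset, if_pos h]
        exact FDP.le_tradeOff P Q (hMmem i).1
          (fun φ' h1' h2' h3' => FDP.np_opt P Q (hMmem i) h1' h2' h3')
      linarith
    -- the composed test
    set ψ : Ω₁ × Ω₂ → ℝ :=
      fun p => ∑ i ∈ Finset.range (n+1), (W i p.1 - W (i+1) p.1) * χ i p.2 with hψdef
    have hterm_nonneg : ∀ i (p : Ω₁ × Ω₂), 0 ≤ (W i p.1 - W (i+1) p.1) * χ i p.2 :=
      fun i p => mul_nonneg (sub_nonneg.2 (hWmono i p.1)) (hχb i p.2).1
    have hterm_le : ∀ i (p : Ω₁ × Ω₂),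
        (W i p.1 - W (i+1) p.1) * χ i p.2 ≤ W i p.1 - W (i+1) p.1 :=
      fun i p => mul_le_of_le_one_right (sub_nonneg.2 (hWmono i p.1)) (hχb i p.2).2
    have hψb : ∀ p, ψ p ∈ Icc (0:ℝ) 1 := by
      intro p
      constructor
      · exact Finset.sum_nonneg fun i _ => hterm_nonneg i p
      · calc ψ p ≤ ∑ i ∈ Finset.range (n+1), (W i p.1 - W (i+1) p.1) :=
              Finset.sum_le_sum fun i _ => hterm_le i p
          _ = W 0 p.1 - W (n+1) p.1 := Finset.sum_range_sub' (fun i => W i p.1) (n+1)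
          _ ≤ 1 := by
              rw [hW0']
              have := (hWmem (n+1) p.1).1
              simp only
              linarith
    have hψm : Measurable ψ := by
      refine Finset.measurable_sum _ fun i _ => ?_
      exact (((hWmeas i).comp measurable_fst).sub
        ((hWmeas (i+1)).comp measurable_fst)).mul ((hχm i).comp measurable_snd)
    have hψint : ∀ (m₁ : Measure Ω₁) (m₂ : Measure Ω₂), IsProbabilityMeasure m₁ →
        IsProbabilityMeasure m₂ →
        ∫ p, ψ p ∂(m₁.prod m₂) = ∑ i ∈ Finset.range (n+1),
          ((∫ x, W i x ∂m₁) - ∫ x, W (i+1) x ∂m₁) * ∫ z, χ i z ∂m₂ := by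
      intro m₁ m₂ hm₁ hm₂
      haveI := hm₁
      haveI := hm₂
      have hint : ∀ i ∈ Finset.range (n+1),
          Integrable (fun p : Ω₁ × Ω₂ => (W i p.1 - W (i+1) p.1) * χ i p.2) (m₁.prod m₂) := by
        intro i _
        refine FDP.test_integrable _
          ((((hWmeas i).comp measurable_fst).sub
            ((hWmeas (i+1)).comp measurable_fst)).mul ((hχm i).comp measurable_snd)) ?_
        intro p
        refine ⟨hterm_nonneg i p, le_trans (hterm_le i p) ?_⟩
        linarith [(hWmem i p.1).2, (hWmem (i+1) p.1).1]
      rw [hψdef]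
      rw [integral_finset_sum _ hint]
      refine Finset.sum_congr rfl fun i _ => ?_
      have h := integral_prod_mul (μ := m₁) (ν := m₂) (fun x => W i x - W (i+1) x) (χ i)
      rw [h, integral_sub (hWint i m₁) (hWint (i+1) m₁)]
    -- level bound
    have hptlevel : ∀ y, ∑ i ∈ Finset.range n, Set.indicator (C i) (1 : Y → ℝ) y * (1/n)
        ≤ a y + 1/n := by
      intro y
      have hstep : ∀ i ∈ Finset.range n, Set.indicator (C i) (1 : Y → ℝ) y * (1/n)
          ≤ (if i < ⌈(n:ℝ) * a y⌉₊ then (1:ℝ) else 0) * (1/n) := by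
        intro i _
        by_cases hy : y ∈ C i
        · have hlti : (i:ℝ) < n * a y := by
            have h' : (i:ℝ)/n < a y := hy
            rw [div_lt_iff₀ hn0] at h'
            linarith
          rw [Set.indicator_of_mem hy, if_pos (Nat.lt_ceil.mpr hlti)]
          simp
        · rw [Set.indicator_of_notMem hy]
          have h0 : (0:ℝ) ≤ (if i < ⌈(n:ℝ) * a y⌉₊ then (1:ℝ) else 0) := by
            split_ifs <;> norm_num
          rw [zero_mul]
          exact mul_nonneg h0 (by positivity)
      calc ∑ i ∈ Finset.range n, Set.indicator (C i) (1 : Y → ℝ) y * (1/n)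
          ≤ ∑ i ∈ Finset.range n, (if i < ⌈(n:ℝ) * a y⌉₊ then (1:ℝ) else 0) * (1/n) :=
            Finset.sum_le_sum hstep
        _ = (((Finset.range n).filter (fun i => i < ⌈(n:ℝ) * a y⌉₊)).card : ℝ) * (1/n) := by
            rw [← Finset.sum_mul, Finset.sum_boole]
        _ ≤ (⌈(n:ℝ) * a y⌉₊ : ℝ) * (1/n) := by
            have hcard : ((Finset.range n).filter (fun i => i < ⌈(n:ℝ) * a y⌉₊)).card
                ≤ ⌈(n:ℝ) * a y⌉₊ := by
              calc ((Finset.range n).filter (fun i => i < ⌈(n:ℝ) * a y⌉₊)).card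
                  ≤ (Finset.range ⌈(n:ℝ) * a y⌉₊).card := Finset.card_le_card (by
                    intro j hj
                    exact Finset.mem_range.mpr (Finset.mem_filter.mp hj).2)
                _ = ⌈(n:ℝ) * a y⌉₊ := Finset.card_range _
            exact mul_le_mul_of_nonneg_right (by exact_mod_cast hcard) (by positivity)
        _ ≤ a y + 1/n := by
            have hceil : (⌈(n:ℝ) * a y⌉₊ : ℝ) < n * a y + 1 :=
              Nat.ceil_lt_add_one (mul_nonneg hn0.le (ha_mem y).1)
            calc (⌈(n:ℝ) * a y⌉₊ : ℝ) * (1/n) ≤ (n * a y + 1) * (1/n) :=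
                  mul_le_mul_of_nonneg_right hceil.le (by positivity)
              _ = a y + 1/n := by field_simp [mul_comm]
    have hMsum : ∑ i ∈ Finset.range n, M i * (1/n) ≤ α + 1/n := by
      have hsumint : ∀ i ∈ Finset.range n,
          Integrable (fun y => Set.indicator (C i) (1 : Y → ℝ) y * (1/n)) μ₁ :=
        fun i _ => (hind_int i μ₁).mul_const _
      have hrepr : ∑ i ∈ Finset.range n, M i * (1/n)
          = ∫ y, ∑ i ∈ Finset.range n, Set.indicator (C i) (1 : Y → ℝ) y * (1/n) ∂μ₁ := by
        rw [integral_finset_sum _ hsumint]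
        refine (Finset.sum_congr rfl fun i _ => ?_).symm
        rw [integral_mul_const, hind_val i μ₁]
      rw [hrepr]
      have haddint : Integrable (fun y => a y + 1/n) μ₁ := ha_int.add (integrable_const _)
      have hmono := integral_mono (μ := μ₁)
        (integrable_finset_sum (Finset.range n) hsumint) haddint hptlevel
      have hIa : ∫ y, (a y + 1/n) ∂μ₁ = (∫ y, a y ∂μ₁) + 1/n := by
        rw [integral_add ha_int (integrable_const _), integral_const]
        simp
      rw [hIa] at hmono
      linarith
    have hlevel_le : ∫ p, ψ p ∂(P.prod P') ≤ α + 1/n := by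
      rw [hψint P P' inferInstance inferInstance]
      have step1 : ∑ i ∈ Finset.range (n+1),
            ((∫ x, W i x ∂P) - ∫ x, W (i+1) x ∂P) * ∫ z, χ i z ∂P'
          ≤ ∑ i ∈ Finset.range (n+1),
            ((∫ x, W i x ∂P) - ∫ x, W (i+1) x ∂P) * ((i:ℝ)/n) :=
        Finset.sum_le_sum fun i _ =>
          mul_le_mul_of_nonneg_left (hχl i) (sub_nonneg.2 (hEPmono i))
      have step2 : ∑ i ∈ Finset.range (n+1),
            ((∫ x, W i x ∂P) - ∫ x, W (i+1) x ∂P) * ((i:ℝ)/n)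
          = ∑ i ∈ Finset.range n, M i * (1/n) := by
        rw [FDP.abel (fun i => ∫ x, W i x ∂P) (fun i => (i:ℝ)/n) n]
        simp only [Nat.cast_zero, zero_div, mul_zero, hEPtop, zero_mul, sub_zero, zero_add]
        refine Finset.sum_congr rfl fun i hi => ?_
        rw [hEPsucc i (Finset.mem_range.mp hi)]
        congr 1
        push_cast
        field_simp
        ring
      linarith [step1, step2.le, step2.ge, hMsum]
    -- power bound
    have hΔnonneg : ∀ i : ℕ, 0 ≤ (1 - tradeOff P' Q' (((i+1:ℕ):ℝ)/n))
        - (1 - tradeOff P' Q' ((i:ℝ)/n)) := by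
      intro i
      have := gt_mono (show (0:ℝ) ≤ (i:ℝ)/n by positivity)
        (show (i:ℝ)/n ≤ ((i+1:ℕ):ℝ)/n from
          (div_le_div_iff_of_pos_right hn0).mpr (by exact_mod_cast Nat.le_succ i))
      linarith
    have hptpow : ∀ y, bf y ≤ (1 - tradeOff P' Q' (((0:ℕ):ℝ)/n))
        + ∑ i ∈ Finset.range n, ((1 - tradeOff P' Q' (((i+1:ℕ):ℝ)/n))
          - (1 - tradeOff P' Q' ((i:ℝ)/n))) * Set.indicator (C i) (1 : Y → ℝ) y := by
      intro y
      have hjn : ⌈(n:ℝ) * a y⌉₊ ≤ n := by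
        refine Nat.ceil_le.mpr ?_
        calc (n:ℝ) * a y ≤ (n:ℝ) * 1 := mul_le_mul_of_nonneg_left (ha_mem y).2 hn0.le
          _ = (n:ℝ) := mul_one _
      have hstep1 : bf y ≤ 1 - tradeOff P' Q' ((⌈(n:ℝ) * a y⌉₊ : ℝ)/n) := by
        refine le_trans (hble y) (gt_mono (ha_mem y).1 ?_)
        rw [le_div_iff₀ hn0]
        calc a y * n = n * a y := mul_comm _ _
          _ ≤ (⌈(n:ℝ) * a y⌉₊ : ℝ) := Nat.le_ceil _
      have htel : ∑ i ∈ Finset.range ⌈(n:ℝ) * a y⌉₊,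
            ((1 - tradeOff P' Q' (((i+1:ℕ):ℝ)/n)) - (1 - tradeOff P' Q' ((i:ℝ)/n)))
          = (1 - tradeOff P' Q' ((⌈(n:ℝ) * a y⌉₊ : ℝ)/n))
            - (1 - tradeOff P' Q' (((0:ℕ):ℝ)/n)) :=
        Finset.sum_range_sub (fun i => 1 - tradeOff P' Q' ((i:ℝ)/n)) _
      have hsub : ∑ i ∈ Finset.range ⌈(n:ℝ) * a y⌉₊,
            ((1 - tradeOff P' Q' (((i+1:ℕ):ℝ)/n)) - (1 - tradeOff P' Q' ((i:ℝ)/n)))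
          ≤ ∑ i ∈ Finset.range n, ((1 - tradeOff P' Q' (((i+1:ℕ):ℝ)/n))
            - (1 - tradeOff P' Q' ((i:ℝ)/n))) * Set.indicator (C i) (1 : Y → ℝ) y := by
        have heq : ∀ i ∈ Finset.range ⌈(n:ℝ) * a y⌉₊,
            ((1 - tradeOff P' Q' (((i+1:ℕ):ℝ)/n)) - (1 - tradeOff P' Q' ((i:ℝ)/n)))
              = ((1 - tradeOff P' Q' (((i+1:ℕ):ℝ)/n))
                - (1 - tradeOff P' Q' ((i:ℝ)/n))) * Set.indicator (C i) (1 : Y → ℝ) y := by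
          intro i hi
          have hiC : y ∈ C i := by
            have h' : (i:ℝ) < n * a y := Nat.lt_ceil.mp (Finset.mem_range.mp hi)
            show (i:ℝ)/n < a y
            rw [div_lt_iff₀ hn0]
            linarith
          rw [Set.indicator_of_mem hiC]
          simp
        rw [Finset.sum_congr rfl heq]
        refine Finset.sum_le_sum_of_subset_of_nonneg ?_ ?_
        · intro i hi
          exact Finset.mem_range.mpr (lt_of_lt_of_le (Finset.mem_range.mp hi) hjn)
        · intro i _ _
          exact mul_nonneg (hΔnonneg i) (hind_mem i y).1
      linarith [hstep1, htel, hsub]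
    have hpowint : ∫ y, bf y ∂μ₁' ≤ (1 - tradeOff P' Q' (((0:ℕ):ℝ)/n))
        + ∑ i ∈ Finset.range n, ((1 - tradeOff P' Q' (((i+1:ℕ):ℝ)/n))
          - (1 - tradeOff P' Q' ((i:ℝ)/n))) * M' i := by
      have hsumint : ∀ i ∈ Finset.range n, Integrable (fun y =>
          ((1 - tradeOff P' Q' (((i+1:ℕ):ℝ)/n)) - (1 - tradeOff P' Q' ((i:ℝ)/n)))
            * Set.indicator (C i) (1 : Y → ℝ) y) μ₁' :=
        fun i _ => (hind_int i μ₁').const_mul _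
      have hintRHS : Integrable (fun y => (1 - tradeOff P' Q' (((0:ℕ):ℝ)/n))
          + ∑ i ∈ Finset.range n, ((1 - tradeOff P' Q' (((i+1:ℕ):ℝ)/n))
            - (1 - tradeOff P' Q' ((i:ℝ)/n))) * Set.indicator (C i) (1 : Y → ℝ) y) μ₁' :=
        (integrable_const _).add (integrable_finset_sum _ hsumint)
      calc ∫ y, bf y ∂μ₁' ≤ ∫ y, ((1 - tradeOff P' Q' (((0:ℕ):ℝ)/n))
          + ∑ i ∈ Finset.range n, ((1 - tradeOff P' Q' (((i+1:ℕ):ℝ)/n))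
            - (1 - tradeOff P' Q' ((i:ℝ)/n))) * Set.indicator (C i) (1 : Y → ℝ) y) ∂μ₁' :=
            integral_mono hbf_int hintRHS hptpow
        _ = (1 - tradeOff P' Q' (((0:ℕ):ℝ)/n))
            + ∑ i ∈ Finset.range n, ((1 - tradeOff P' Q' (((i+1:ℕ):ℝ)/n))
              - (1 - tradeOff P' Q' ((i:ℝ)/n))) * M' i := by
            rw [integral_add (integrable_const _) (integrable_finset_sum _ hsumint),
              integral_const, integral_finset_sum _ hsumint]
            simp only [measure_univ, probReal_univ, ENNReal.toReal_one, smul_eq_mul, one_mul]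
            congr 1
            refine Finset.sum_congr rfl fun i _ => ?_
            rw [integral_const_mul, hind_val i μ₁']
    have hpow_ge : (1 - tradeOff P' Q' (((0:ℕ):ℝ)/n))
        + (∑ i ∈ Finset.range n, ((1 - tradeOff P' Q' (((i+1:ℕ):ℝ)/n))
          - (1 - tradeOff P' Q' ((i:ℝ)/n))) * M' i) - δ/2 ≤ ∫ p, ψ p ∂(Q.prod Q') := by
      rw [hψint Q Q' inferInstance inferInstance]
      have step1 : ∑ i ∈ Finset.range (n+1),
            ((∫ x, W i x ∂Q) - ∫ x, W (i+1) x ∂Q) * (1 - tradeOff P' Q' ((i:ℝ)/n) - δ/2)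
          ≤ ∑ i ∈ Finset.range (n+1),
            ((∫ x, W i x ∂Q) - ∫ x, W (i+1) x ∂Q) * ∫ z, χ i z ∂Q' :=
        Finset.sum_le_sum fun i _ =>
          mul_le_mul_of_nonneg_left (hχp i) (sub_nonneg.2 (hEQmono i))
      have step2 : ∑ i ∈ Finset.range (n+1),
            ((∫ x, W i x ∂Q) - ∫ x, W (i+1) x ∂Q) * (1 - tradeOff P' Q' ((i:ℝ)/n) - δ/2)
          = (∑ i ∈ Finset.range (n+1),
              ((∫ x, W i x ∂Q) - ∫ x, W (i+1) x ∂Q) * (1 - tradeOff P' Q' ((i:ℝ)/n)))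
            - δ/2 * ((∫ x, W 0 x ∂Q) - ∫ x, W (n+1) x ∂Q) := by
        rw [← Finset.sum_range_sub' (fun i => ∫ x, W i x ∂Q) (n+1), Finset.mul_sum,
          ← Finset.sum_sub_distrib]
        exact Finset.sum_congr rfl fun i _ => by ring
      have step3 : ∑ i ∈ Finset.range (n+1),
            ((∫ x, W i x ∂Q) - ∫ x, W (i+1) x ∂Q) * (1 - tradeOff P' Q' ((i:ℝ)/n))
          = (1 - tradeOff P' Q' (((0:ℕ):ℝ)/n))
            + ∑ i ∈ Finset.range n, (∫ x, W (i+1) x ∂Q)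
              * ((1 - tradeOff P' Q' (((i+1:ℕ):ℝ)/n)) - (1 - tradeOff P' Q' ((i:ℝ)/n))) := by
        rw [FDP.abel (fun i => ∫ x, W i x ∂Q) (fun i => 1 - tradeOff P' Q' ((i:ℝ)/n)) n,
          hEQ0, hEQtop]
        ring
      have step4 : ∑ i ∈ Finset.range n, ((1 - tradeOff P' Q' (((i+1:ℕ):ℝ)/n))
            - (1 - tradeOff P' Q' ((i:ℝ)/n))) * M' i
          ≤ ∑ i ∈ Finset.range n, (∫ x, W (i+1) x ∂Q)
            * ((1 - tradeOff P' Q' (((i+1:ℕ):ℝ)/n)) - (1 - tradeOff P' Q' ((i:ℝ)/n))) := by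
        refine Finset.sum_le_sum fun i hi => ?_
        rw [mul_comm]
        exact mul_le_mul_of_nonneg_right (hchain i (Finset.mem_range.mp hi)) (hΔnonneg i)
      rw [hEQ0, hEQtop] at step2
      linarith [step1, step2, step3, step4]
    -- conclusion
    set lam : ℝ := α / (α + 1/n) with hlam
    have hden : (0:ℝ) < α + 1/n := by positivity
    have hlam0 : 0 ≤ lam := by positivity
    have hlam1 : lam ≤ 1 := by
      rw [hlam, div_le_one hden]
      have : (0:ℝ) < 1/n := by positivity
      linarith
    have h1lam : 1 - lam ≤ δ/2 := by
      have he : 1 - lam = (1/n) / (α + 1/n) := by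
        rw [hlam]
        field_simp
        ring
      rw [he]
      calc (1/n : ℝ) / (α + 1/n) ≤ (1/n) / α := by
            have hle : α ≤ α + 1/n := by
              linarith [show (0:ℝ) < 1/n by positivity]
            exact div_le_div_of_nonneg_left (by positivity) hα0 hle
        _ = 1 / (n * α) := by rw [div_div]
        _ ≤ δ/2 := hkey2
    have hlevel_fin : (∫ p, lam * ψ p ∂(P.prod P')) ≤ α := by
      rw [integral_const_mul]
      calc lam * ∫ p, ψ p ∂(P.prod P') ≤ lam * (α + 1/n) :=
            mul_le_mul_of_nonneg_left hlevel_le hlam0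
        _ = α := by
            rw [hlam]
            field_simp
    have hmem2 : ∀ p, lam * ψ p ∈ Icc (0:ℝ) 1 := fun p =>
      ⟨mul_nonneg hlam0 (hψb p).1, by nlinarith [(hψb p).1, (hψb p).2]⟩
    have hfinal := FDP.tradeOff_le (P.prod P') (Q.prod Q')
      ((hψm.const_mul lam)) hmem2 hlevel_fin
    rw [integral_const_mul] at hfinal
    rw [hpowφ]
    have hpφ1 : ∫ y, bf y ∂μ₁' ≤ 1 := FDP.test_integral_le_one μ₁' hbM hb_mem
    have hpφ0 : 0 ≤ ∫ y, bf y ∂μ₁' := FDP.test_integral_nonneg μ₁' hb_mem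
    have hB : ∫ y, bf y ∂μ₁' - δ/2 ≤ ∫ p, ψ p ∂(Q.prod Q') := by linarith [hpowint, hpow_ge]
    have hBmul := mul_le_mul_of_nonneg_left hB hlam0
    have hprod1 : (1 - lam) * (∫ y, bf y ∂μ₁') ≤ (δ/2) * 1 :=
      mul_le_mul h1lam hpφ1 hpφ0 (by linarith)
    have hprod2 : lam * (δ/2) ≤ δ/2 := by nlinarith
    nlinarith [hfinal, hBmul, hprod1, hprod2]
end

section
/- Let g : [0,1] → ℝ be measurable with g(x) ≥ −1 for all x and ∫₀¹ g(x)⁴ dx < ∞. Then lim_{p→0⁺} (1/p²)·∫₀¹ p·g(x)·log(1 + p·g(x)) dx = ∫₀¹ g(x)² dx (with the convention 0·log 0 = 0). Equivalently, writing f_p for a trade-off function with |f_p′| = 1 + p·g, the sum kl(f_p) + k̃l(f_p) = ∫₀¹ [ −log(1+p·g(x)) + (1+p·g(x))·log(1+p·g(x)) ] dx satisfies (kl(f_p) + k̃l(f_p))/p² → ∫₀¹ g² dx as p → 0⁺. -/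
open MeasureTheory Filter Set

private lemma key_bound (t : ℝ) (ht : -(1/2:ℝ) ≤ t) :
    |t * Real.log (1 + t)| ≤ 2 * t ^ 2 := by
  rcases le_or_gt 0 t with h | h
  · have h1 : 0 ≤ Real.log (1 + t) := Real.log_nonneg (by linarith)
    have h2 : Real.log (1 + t) ≤ t := by
      have := Real.log_le_sub_one_of_pos (show (0:ℝ) < 1 + t by linarith)
      linarith
    rw [abs_of_nonneg (mul_nonneg h h1)]
    nlinarith
  · have hpos : (0:ℝ) < 1 + t := by linarith
    have hlog : Real.log (1 + t) ≤ 0 :=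
      Real.log_nonpos (by linarith) (by linarith)
    have h4 : Real.log ((1 + t)⁻¹) ≤ (1 + t)⁻¹ - 1 :=
      Real.log_le_sub_one_of_pos (by positivity)
    rw [Real.log_inv] at h4
    have hkey : (1 + t)⁻¹ ≤ 1 - 2 * t := by
      rw [inv_le_iff_one_le_mul₀ hpos]
      nlinarith
    have h6 : -Real.log (1 + t) ≤ -(2 * t) := by linarith
    have hnn : 0 ≤ t * Real.log (1 + t) := by
      nlinarith [mul_nonneg (by linarith : (0:ℝ) ≤ -t)
        (by linarith : (0:ℝ) ≤ -Real.log (1 + t))]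
    rw [abs_of_nonneg hnn]
    nlinarith [mul_le_mul_of_nonneg_left h6 (by linarith : (0:ℝ) ≤ -t)]

theorem stmt_15 (g : ℝ → ℝ) (hmeas : Measurable g)
    (hg : ∀ x ∈ Set.Icc (0:ℝ) 1, -1 ≤ g x)
    (hint : IntegrableOn (fun x => g x ^ 4) (Set.Icc (0:ℝ) 1)) :
    Tendsto
      (fun p : ℝ => (1 / p ^ 2) *
        ∫ x in Set.Icc (0:ℝ) 1, p * g x * Real.log (1 + p * g x))
      (nhdsWithin 0 (Set.Ioi 0))
      (nhds (∫ x in Set.Icc (0:ℝ) 1, g x ^ 2)) ∧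
    Tendsto
      (fun p : ℝ => (1 / p ^ 2) *
        ∫ x in Set.Icc (0:ℝ) 1,
          (-Real.log (1 + p * g x) + (1 + p * g x) * Real.log (1 + p * g x)))
      (nhdsWithin 0 (Set.Ioi 0))
      (nhds (∫ x in Set.Icc (0:ℝ) 1, g x ^ 2)) := by
  have hbound_int : Integrable (fun x => 2 * g x ^ 2)
      (volume.restrict (Set.Icc (0:ℝ) 1)) := by
    have h1 : Integrable (fun x => (1:ℝ) + g x ^ 4)
        (volume.restrict (Set.Icc (0:ℝ) 1)) := by
      refine (integrable_const 1).add ?_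
      exact hint
    refine (h1.const_mul 2).mono' ?_ ?_
    · exact ((hmeas.pow_const 2).const_mul 2).aestronglyMeasurable
    · refine Eventually.of_forall fun x => ?_
      have : g x ^ 2 ≤ 1 + g x ^ 4 := by nlinarith [sq_nonneg (g x ^ 2 - 1), sq_nonneg (g x)]
      rw [Real.norm_eq_abs, abs_of_nonneg (by positivity)]
      linarith
  have main : Tendsto
      (fun p : ℝ => ∫ x in Set.Icc (0:ℝ) 1,
        (1 / p ^ 2) * (p * g x * Real.log (1 + p * g x)))
      (nhdsWithin 0 (Set.Ioi 0))
      (nhds (∫ x in Set.Icc (0:ℝ) 1, g x ^ 2)) := by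
    refine tendsto_integral_filter_of_dominated_convergence
      (fun x => 2 * g x ^ 2) ?_ ?_ hbound_int ?_
    · refine Eventually.of_forall fun p => ?_
      exact (((hmeas.const_mul p).mul
        ((measurable_const.add (hmeas.const_mul p)).log)).const_mul
          (1 / p ^ 2)).aestronglyMeasurable
    · have hmem : Set.Ioc (0:ℝ) (1/2) ∈ nhdsWithin (0:ℝ) (Set.Ioi 0) :=
        Ioc_mem_nhdsGT_of_mem (by constructor <;> norm_num)
      filter_upwards [hmem] with p hp
      refine (ae_restrict_iff' measurableSet_Icc).2 (Eventually.of_forall fun x hx => ?_)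
      have hp0 : 0 < p := hp.1
      have hgx : -1 ≤ g x := hg x hx
      have ht : -(1/2:ℝ) ≤ p * g x := by nlinarith [hp.2]
      have hb := key_bound (p * g x) ht
      rw [Real.norm_eq_abs, abs_mul]
      rw [abs_of_nonneg (by positivity : (0:ℝ) ≤ 1 / p ^ 2)]
      have : (1 / p ^ 2) * |p * g x * Real.log (1 + p * g x)|
          ≤ (1 / p ^ 2) * (2 * (p * g x) ^ 2) :=
        mul_le_mul_of_nonneg_left hb (by positivity)
      calc (1 / p ^ 2) * |p * g x * Real.log (1 + p * g x)|
          ≤ (1 / p ^ 2) * (2 * (p * g x) ^ 2) := this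
        _ = 2 * g x ^ 2 := by field_simp
    · refine (ae_restrict_iff' measurableSet_Icc).2 (Eventually.of_forall fun x hx => ?_)
      by_cases hc : g x = 0
      · have hz : (fun p : ℝ => 1 / p ^ 2 * (p * g x * Real.log (1 + p * g x)))
            = fun _ => (0:ℝ) := by
          funext p; simp [hc]
        rw [hz, hc]
        simp
      · have hslope : Tendsto (slope Real.log 1)
            (nhdsWithin 1 {(1:ℝ)}ᶜ) (nhds 1) := by
          have hd : HasDerivAt Real.log 1 1 := by
            simpa using Real.hasDerivAt_log one_ne_zero
          exact hasDerivAt_iff_tendsto_slope.1 hd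
        have h1 : Tendsto (fun p : ℝ => 1 + p * g x)
            (nhdsWithin 0 (Set.Ioi 0)) (nhdsWithin 1 {(1:ℝ)}ᶜ) := by
          rw [tendsto_nhdsWithin_iff]
          constructor
          · have : Tendsto (fun p : ℝ => 1 + p * g x) (nhds 0) (nhds (1 + 0 * g x)) := by
              exact (tendsto_id.mul_const (g x)).const_add 1
            simpa using this.mono_left nhdsWithin_le_nhds
          · filter_upwards [self_mem_nhdsWithin] with p hp
            have hp0 : (0:ℝ) < p := hp
            simp only [Set.mem_compl_iff, Set.mem_singleton_iff]
            intro h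
            apply hc
            have : p * g x = 0 := by linarith
            exact (mul_eq_zero.1 this).resolve_left (ne_of_gt hp0)
        have h2 : Tendsto
            (fun p : ℝ => g x ^ 2 * slope Real.log 1 (1 + p * g x))
            (nhdsWithin 0 (Set.Ioi 0)) (nhds (g x ^ 2 * 1)) :=
          (hslope.comp h1).const_mul _
        rw [mul_one] at h2
        refine Tendsto.congr' ?_ h2
        filter_upwards [self_mem_nhdsWithin] with p hp
        have hp0 : (0:ℝ) < p := hp
        have hp' : p ≠ 0 := ne_of_gt hp0
        simp only [slope_def_field, Real.log_one]
        field_simp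
        ring
  have eq1 : (fun p : ℝ => (1 / p ^ 2) *
        ∫ x in Set.Icc (0:ℝ) 1, p * g x * Real.log (1 + p * g x))
      = (fun p : ℝ => ∫ x in Set.Icc (0:ℝ) 1,
        (1 / p ^ 2) * (p * g x * Real.log (1 + p * g x))) := by
    funext p
    rw [MeasureTheory.integral_const_mul]
  have part1 : Tendsto
      (fun p : ℝ => (1 / p ^ 2) *
        ∫ x in Set.Icc (0:ℝ) 1, p * g x * Real.log (1 + p * g x))
      (nhdsWithin 0 (Set.Ioi 0))
      (nhds (∫ x in Set.Icc (0:ℝ) 1, g x ^ 2)) := by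
    rw [eq1]; exact main
  refine ⟨part1, ?_⟩
  have eq2 : (fun p : ℝ => (1 / p ^ 2) *
      ∫ x in Set.Icc (0:ℝ) 1,
        (-Real.log (1 + p * g x) + (1 + p * g x) * Real.log (1 + p * g x)))
      = (fun p : ℝ => (1 / p ^ 2) *
      ∫ x in Set.Icc (0:ℝ) 1, p * g x * Real.log (1 + p * g x)) := by
    funext p
    congr 1
    apply integral_congr_ae
    refine Eventually.of_forall fun x => ?_
    ring
  rw [eq2]
  exact part1
end

section
/- Let g : [0,1] → ℝ be measurable with g(x) ≥ −1 for all x and ∫₀¹ g(x)⁴ dx < ∞. Then lim_{p→0⁺} (1/p²)·∫₀¹ [log(1 + p·g(x))]² dx = ∫₀¹ g(x)² dx, and lim_{p→0⁺} (1/p²)·∫₀¹ (1 + p·g(x))·[log(1 + p·g(x))]² dx = ∫₀¹ g(x)² dx (with the convention 0·log² 0 = 0). -/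
open MeasureTheory Filter Set

lemma aux_log_abs_le (u : ℝ) (hu : -(1/2) ≤ u) : |Real.log (1+u)| ≤ 2*|u| := by
  have h0 : (0:ℝ) < 1 + u := by linarith
  rcases le_or_gt 0 u with h | h
  · rw [abs_of_nonneg (Real.log_nonneg (by linarith)), abs_of_nonneg h]
    have := Real.log_le_sub_one_of_pos h0
    linarith
  · rw [abs_of_nonpos (Real.log_nonpos (by linarith) (by linarith)), abs_of_neg h]
    have h2 : Real.log ((1+u)⁻¹) ≤ (1+u)⁻¹ - 1 :=
      Real.log_le_sub_one_of_pos (by positivity)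
    rw [Real.log_inv] at h2
    have h4 : (1+u)⁻¹ ≤ 1 - 2*u := by
      rw [inv_le_iff_one_le_mul₀ h0]
      nlinarith
    linarith

lemma aux_slope_tendsto (c : ℝ) :
    Tendsto (fun p : ℝ => Real.log (1 + p*c)/p) (nhdsWithin 0 (Set.Ioi 0)) (nhds c) := by
  have hd : HasDerivAt (fun p : ℝ => Real.log (1 + p*c)) c 0 := by
    have h1 : HasDerivAt (fun p : ℝ => 1 + p*c) c 0 := by
      simpa using ((hasDerivAt_id (0:ℝ)).mul_const c).const_add 1
    have h2 := h1.log (by norm_num)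
    simpa using h2
  have h3 := hasDerivAt_iff_tendsto_slope.mp hd
  have h4 := h3.mono_left (nhdsWithin_mono 0 (fun x hx => ne_of_gt hx))
  refine h4.congr ?_
  intro p
  simp [slope_def_field]

theorem stmt_16 (g : ℝ → ℝ) (hmeas : Measurable g)
    (hg : ∀ x ∈ Set.Icc (0:ℝ) 1, -1 ≤ g x)
    (hint : IntegrableOn (fun x => g x ^ 4) (Set.Icc (0:ℝ) 1)) :
    Tendsto
      (fun p : ℝ => (1 / p ^ 2) *
        ∫ x in Set.Icc (0:ℝ) 1, Real.log (1 + p * g x) ^ 2)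
      (nhdsWithin 0 (Set.Ioi 0))
      (nhds (∫ x in Set.Icc (0:ℝ) 1, g x ^ 2)) ∧
    Tendsto
      (fun p : ℝ => (1 / p ^ 2) *
        ∫ x in Set.Icc (0:ℝ) 1, (1 + p * g x) * Real.log (1 + p * g x) ^ 2)
      (nhdsWithin 0 (Set.Ioi 0))
      (nhds (∫ x in Set.Icc (0:ℝ) 1, g x ^ 2)) := by
  have hmemIoc : Set.Ioc (0:ℝ) (1/2) ∈ nhdsWithin (0:ℝ) (Set.Ioi 0) :=
    Ioc_mem_nhdsGT_of_mem (by constructor <;> norm_num)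
  have hlogmeas : ∀ p : ℝ, Measurable fun x => Real.log (1 + p * g x) :=
    fun p => Real.measurable_log.comp (measurable_const.add (measurable_const.mul hmeas))
  -- integrable bound
  have hbound_int : Integrable (fun x => 8 + 8 * g x ^ 4)
      (volume.restrict (Set.Icc (0:ℝ) 1)) := by
    have h1 : IntegrableOn (fun _ : ℝ => (8:ℝ)) (Set.Icc (0:ℝ) 1) :=
      (integrableOn_const_iff).mpr (Or.inr measure_Icc_lt_top)
    exact h1.add (hint.const_mul 8)
  -- key pointwise bound:
  have hkey : ∀ p ∈ Set.Ioc (0:ℝ) (1/2), ∀ x ∈ Set.Icc (0:ℝ) 1,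
      Real.log (1 + p * g x) ^ 2 ≤ 4 * p^2 * g x ^ 2 := by
    intro p hp x hx
    have hgx := hg x hx
    have habs : |Real.log (1 + p * g x)| ≤ 2 * |p * g x| := by
      apply aux_log_abs_le
      nlinarith [hp.1, hp.2]
    have h1 : Real.log (1 + p * g x) ^ 2 ≤ (2 * |p * g x|)^2 := by
      rw [← sq_abs]
      exact pow_le_pow_left₀ (abs_nonneg _) habs 2
    calc Real.log (1 + p * g x) ^ 2 ≤ (2 * |p * g x|)^2 := h1
      _ = 4 * p^2 * g x ^ 2 := by rw [mul_pow, sq_abs, mul_pow]; ring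
  constructor
  · -- first limit
    have heq : (fun p : ℝ => (1 / p ^ 2) *
        ∫ x in Set.Icc (0:ℝ) 1, Real.log (1 + p * g x) ^ 2)
        = fun p : ℝ => ∫ x in Set.Icc (0:ℝ) 1, (1 / p ^ 2) * Real.log (1 + p * g x) ^ 2 := by
      funext p; rw [integral_const_mul]
    rw [heq]
    apply tendsto_integral_filter_of_dominated_convergence (fun x => 8 + 8 * g x ^ 4)
    · filter_upwards with p
      exact (measurable_const.mul ((hlogmeas p).pow_const 2)).aestronglyMeasurable
    · filter_upwards [hmemIoc] with p hp
      rw [ae_restrict_iff' measurableSet_Icc]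
      filter_upwards with x hx
      have hk := hkey p hp x hx
      have hp2 : (0:ℝ) < p^2 := pow_pos hp.1 2
      have hnn : (0:ℝ) ≤ (1 / p ^ 2) * Real.log (1 + p * g x) ^ 2 :=
        mul_nonneg (by positivity) (sq_nonneg _)
      rw [Real.norm_eq_abs, abs_of_nonneg hnn]
      have h5 : (1 / p ^ 2) * Real.log (1 + p * g x) ^ 2
          ≤ (1 / p ^ 2) * (4 * p^2 * g x ^ 2) :=
        mul_le_mul_of_nonneg_left hk (by positivity)
      have h6 : (1 / p ^ 2) * (4 * p^2 * g x ^ 2) = 4 * g x ^ 2 := by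
        have hp0 : p ≠ 0 := ne_of_gt hp.1
        field_simp
      nlinarith [sq_nonneg (g x ^ 2 - 1)]
    · exact hbound_int
    · rw [ae_restrict_iff' measurableSet_Icc]
      filter_upwards with x hx
      have h := (aux_slope_tendsto (g x)).pow 2
      refine h.congr ?_
      intro p
      ring
  · -- second limit
    have heq : (fun p : ℝ => (1 / p ^ 2) *
        ∫ x in Set.Icc (0:ℝ) 1, (1 + p * g x) * Real.log (1 + p * g x) ^ 2)
        = fun p : ℝ => ∫ x in Set.Icc (0:ℝ) 1,
            (1 / p ^ 2) * ((1 + p * g x) * Real.log (1 + p * g x) ^ 2) := by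
      funext p; rw [integral_const_mul]
    rw [heq]
    apply tendsto_integral_filter_of_dominated_convergence (fun x => 8 + 8 * g x ^ 4)
    · filter_upwards with p
      exact (measurable_const.mul
        ((measurable_const.add (measurable_const.mul hmeas)).mul
          ((hlogmeas p).pow_const 2))).aestronglyMeasurable
    · filter_upwards [hmemIoc] with p hp
      rw [ae_restrict_iff' measurableSet_Icc]
      filter_upwards with x hx
      have hgx := hg x hx
      have hk := hkey p hp x hx
      have hpos : (0:ℝ) < 1 + p * g x := by nlinarith [hp.1, hp.2]
      have hnn : (0:ℝ) ≤ (1 / p ^ 2) * ((1 + p * g x) * Real.log (1 + p * g x) ^ 2) := by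
        positivity
      rw [Real.norm_eq_abs, abs_of_nonneg hnn]
      have h1 : 1 + p * g x ≤ 1 + |g x| := by
        have := le_abs_self (g x)
        nlinarith [hp.1, hp.2, abs_nonneg (g x)]
      have h5 : (1 + p * g x) * Real.log (1 + p * g x) ^ 2
          ≤ (1 + |g x|) * (4 * p^2 * g x ^ 2) := by
        apply mul_le_mul h1 hk (sq_nonneg _) (by positivity)
      have h6 : (1 / p ^ 2) * ((1 + p * g x) * Real.log (1 + p * g x) ^ 2)
          ≤ (1 / p ^ 2) * ((1 + |g x|) * (4 * p^2 * g x ^ 2)) :=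
        mul_le_mul_of_nonneg_left h5 (by positivity)
      have h7 : (1 / p ^ 2) * ((1 + |g x|) * (4 * p^2 * g x ^ 2))
          = 4 * g x ^ 2 + 4 * |g x| * g x ^ 2 := by
        have hp0 : p ≠ 0 := ne_of_gt hp.1
        field_simp
      have h8 : 4 * g x ^ 2 + 4 * |g x| * g x ^ 2 ≤ 8 + 8 * g x ^ 4 := by
        have ha2 : g x ^ 2 = |g x|^2 := (sq_abs _).symm
        have ha4 : g x ^ 4 = |g x|^4 := by rw [← abs_pow]; exact (abs_of_nonneg (by positivity)).symm
        rw [ha2, ha4]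
        nlinarith [abs_nonneg (g x), sq_nonneg (|g x|^2 - 1), sq_nonneg (|g x|^2 - |g x|)]
      linarith
    · exact hbound_int
    · rw [ae_restrict_iff' measurableSet_Icc]
      filter_upwards with x hx
      have h1 : Tendsto (fun p : ℝ => 1 + p * g x) (nhdsWithin 0 (Set.Ioi 0)) (nhds 1) := by
        have : Tendsto (fun p : ℝ => 1 + p * g x) (nhds 0) (nhds (1 + 0 * g x)) :=
          (continuous_const.add (continuous_id.mul continuous_const)).tendsto 0
        simpa using this.mono_left nhdsWithin_le_nhds
      have h2 := (aux_slope_tendsto (g x)).pow 2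
      have h3 := h1.mul h2
      rw [one_mul] at h3
      refine h3.congr ?_
      intro p
      ring
end

section
/- Let g : [0,1] → ℝ be measurable with g(x) ≥ −1 for all x and ∫₀¹ g(x)⁴ dx < ∞. Then lim_{p→0⁺} (1/p³)·∫₀¹ |log(1 + p·g(x))|³ dx = ∫₀¹ |g(x)|³ dx and lim_{p→0⁺} (1/p³)·∫₀¹ (1 + p·g(x))·|log(1 + p·g(x))|³ dx = ∫₀¹ |g(x)|³ dx; in particular both ∫₀¹ |log(1 + p·g(x))|³ dx and ∫₀¹ (1 + p·g(x))·|log(1 + p·g(x))|³ dx are o(p²) as p → 0⁺. -/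
open MeasureTheory Filter Set Topology

lemma aux_log_bound (t : ℝ) (ht : -(1/2) ≤ t) : |Real.log (1+t)| ≤ 2*|t| := by
  rcases le_or_gt 0 t with h | h
  · rw [abs_of_nonneg (Real.log_nonneg (by linarith)), abs_of_nonneg h]
    have := Real.log_le_sub_one_of_pos (show (0:ℝ) < 1+t by linarith)
    linarith
  · have h1 : (0:ℝ) < 1 + t := by linarith
    rw [abs_of_nonpos (Real.log_nonpos (by linarith) (by linarith)), abs_of_neg h]
    have h2 := Real.log_le_sub_one_of_pos (show (0:ℝ) < (1+t)⁻¹ by positivity)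
    rw [Real.log_inv] at h2
    have h5 : (1+t)⁻¹ ≤ 1 - 2*t := by
      rw [inv_eq_one_div, div_le_iff₀ h1]; nlinarith
    linarith

lemma aux_tendsto (c : ℝ) : Tendsto (fun p : ℝ => (1/p^3) * |Real.log (1+p*c)|^3)
    (𝓝[>] (0:ℝ)) (𝓝 (|c|^3)) := by
  have hd : HasDerivAt (fun p : ℝ => Real.log (1+p*c)) c 0 := by
    have h1 : HasDerivAt (fun p : ℝ => 1+p*c) c 0 :=
      ((hasDerivAt_mul_const c).const_add 1)
    have := h1.log (by norm_num)
    simpa using this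
  have hs := hasDerivAt_iff_tendsto_slope.mp hd
  have hs' : Tendsto (slope (fun p : ℝ => Real.log (1+p*c)) 0) (𝓝[>] (0:ℝ)) (𝓝 c) :=
    hs.mono_left (nhdsWithin_mono _ (fun x hx => ne_of_gt hx))
  have habs : Tendsto (fun p : ℝ => |slope (fun p : ℝ => Real.log (1+p*c)) 0 p|^3)
      (𝓝[>] (0:ℝ)) (𝓝 (|c|^3)) := (hs'.abs).pow 3
  refine habs.congr' ?_
  filter_upwards [self_mem_nhdsWithin] with p (hp : p ∈ Ioi (0:ℝ))
  rw [slope_def_field]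
  simp only [zero_mul, add_zero, Real.log_one, sub_zero]
  rw [abs_div, div_pow, abs_of_pos (show (0:ℝ) < p from hp)]
  ring

theorem stmt_17 (g : ℝ → ℝ) (hmeas : Measurable g)
    (hg : ∀ x ∈ Set.Icc (0:ℝ) 1, -1 ≤ g x)
    (hint : IntegrableOn (fun x => g x ^ 4) (Set.Icc (0:ℝ) 1)) :
    Tendsto
      (fun p : ℝ => (1 / p ^ 3) *
        ∫ x in Set.Icc (0:ℝ) 1, |Real.log (1 + p * g x)| ^ 3)
      (nhdsWithin 0 (Set.Ioi 0))
      (nhds (∫ x in Set.Icc (0:ℝ) 1, |g x| ^ 3)) ∧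
    Tendsto
      (fun p : ℝ => (1 / p ^ 3) *
        ∫ x in Set.Icc (0:ℝ) 1, (1 + p * g x) * |Real.log (1 + p * g x)| ^ 3)
      (nhdsWithin 0 (Set.Ioi 0))
      (nhds (∫ x in Set.Icc (0:ℝ) 1, |g x| ^ 3)) ∧
    Tendsto
      (fun p : ℝ => (1 / p ^ 2) *
        ∫ x in Set.Icc (0:ℝ) 1, |Real.log (1 + p * g x)| ^ 3)
      (nhdsWithin 0 (Set.Ioi 0)) (nhds 0) ∧
    Tendsto
      (fun p : ℝ => (1 / p ^ 2) *
        ∫ x in Set.Icc (0:ℝ) 1, (1 + p * g x) * |Real.log (1 + p * g x)| ^ 3)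
      (nhdsWithin 0 (Set.Ioi 0)) (nhds 0) := by
  set μ := volume.restrict (Set.Icc (0:ℝ) 1) with hμ
  -- measurability
  have hlogmeas : ∀ p : ℝ, Measurable fun x => |Real.log (1 + p * g x)| ^ 3 := by
    intro p
    exact ((Real.measurable_log.comp
      (measurable_const.add (measurable_const.mul hmeas))).abs).pow_const 3
  -- bound function integrable
  have hbound_int : Integrable (fun x => 12 * (1 + g x ^ 4)) μ := by
    have h1 : Integrable (fun _ : ℝ => (1:ℝ)) μ := by
      rw [hμ]
      exact (integrableOn_const_iff).mpr (Or.inr (by rw [Real.volume_Icc]; norm_num))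
    exact ((h1.add hint).const_mul 12)
  -- ae lower bound on g
  have hgae : ∀ᵐ x ∂μ, -1 ≤ g x := by
    rw [hμ, ae_restrict_iff' measurableSet_Icc]
    exact ae_of_all _ hg
  -- key a.e. bounds for small p
  have hPbound : ∀ p ∈ Set.Ioo (0:ℝ) (1/2), ∀ x : ℝ, -1 ≤ g x →
      (1/p^3) * |Real.log (1 + p * g x)| ^ 3 ≤ 8 * |g x| ^ 3 ∧
      0 ≤ (1/p^3) * |Real.log (1 + p * g x)| ^ 3 ∧ 0 ≤ 1 + p * g x := by
    intro p hp x hx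
    obtain ⟨hp0, hp2⟩ := hp
    have hpg : -(1/2) ≤ p * g x := by nlinarith
    have hkey := aux_log_bound (p * g x) hpg
    have habs : |p * g x| = p * |g x| := by
      rw [abs_mul, abs_of_pos hp0]
    rw [habs] at hkey
    have h3 : |Real.log (1 + p * g x)| ^ 3 ≤ (2 * (p * |g x|)) ^ 3 :=
      pow_le_pow_left₀ (abs_nonneg _) hkey 3
    have h4 : (2 * (p * |g x|)) ^ 3 = 8 * p^3 * |g x|^3 := by ring
    have hp3 : (0:ℝ) < p^3 := by positivity
    refine ⟨?_, by positivity, by nlinarith⟩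
    rw [div_mul_eq_mul_div, one_mul, div_le_iff₀ hp3]
    nlinarith [abs_nonneg (Real.log (1 + p * g x))]
  have hmem : Set.Ioo (0:ℝ) (1/2) ∈ 𝓝[>] (0:ℝ) :=
    Ioo_mem_nhdsGT_of_mem (by norm_num)
  -- |g|^3 ≤ 1 + g^4
  have hg3le : ∀ x : ℝ, |g x| ^ 3 ≤ 1 + g x ^ 4 := by
    intro x
    have h1 : |g x| ^ 4 = g x ^ 4 := by
      rw [← abs_pow, abs_of_nonneg (by positivity)]
    nlinarith [abs_nonneg (g x), sq_nonneg (|g x|^2 - |g x|), sq_nonneg (|g x| - 1)]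
  -- First limit
  have T1 : Tendsto
      (fun p : ℝ => ∫ x in Set.Icc (0:ℝ) 1, (1/p^3) * |Real.log (1 + p * g x)| ^ 3)
      (𝓝[>] (0:ℝ)) (𝓝 (∫ x in Set.Icc (0:ℝ) 1, |g x| ^ 3)) := by
    refine tendsto_integral_filter_of_dominated_convergence
      (fun x => 12 * (1 + g x ^ 4)) ?_ ?_ hbound_int ?_
    · exact Eventually.of_forall fun p =>
        ((measurable_const.mul (hlogmeas p))).aestronglyMeasurable
    · filter_upwards [hmem] with p hp
      filter_upwards [hgae] with x hx
      obtain ⟨hle, hnn, _⟩ := hPbound p hp x hx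
      rw [Real.norm_eq_abs, abs_of_nonneg hnn]
      have := hg3le x
      linarith
    · exact ae_of_all _ fun x => aux_tendsto (g x)
  -- Second limit
  have T2 : Tendsto
      (fun p : ℝ => ∫ x in Set.Icc (0:ℝ) 1,
        (1/p^3) * ((1 + p * g x) * |Real.log (1 + p * g x)| ^ 3))
      (𝓝[>] (0:ℝ)) (𝓝 (∫ x in Set.Icc (0:ℝ) 1, |g x| ^ 3)) := by
    refine tendsto_integral_filter_of_dominated_convergence
      (fun x => 12 * (1 + g x ^ 4)) ?_ ?_ hbound_int ?_
    · refine Eventually.of_forall fun p => Measurable.aestronglyMeasurable ?_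
      exact measurable_const.mul
        ((measurable_const.add (measurable_const.mul hmeas)).mul (hlogmeas p))
    · filter_upwards [hmem] with p hp
      filter_upwards [hgae] with x hx
      obtain ⟨hle, hnn, hnn2⟩ := hPbound p hp x hx
      have hrw : (1/p^3) * ((1 + p * g x) * |Real.log (1 + p * g x)| ^ 3)
          = (1 + p * g x) * ((1/p^3) * |Real.log (1 + p * g x)| ^ 3) := by ring
      rw [Real.norm_eq_abs, hrw, abs_of_nonneg (mul_nonneg hnn2 hnn)]
      have hub : 1 + p * g x ≤ 1 + |g x| / 2 := by
        have : p * g x ≤ p * |g x| := by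
          exact mul_le_mul_of_nonneg_left (le_abs_self _) hp.1.le
        nlinarith [abs_nonneg (g x), hp.2, hp.1]
      have h1 : (1 + p * g x) * ((1/p^3) * |Real.log (1 + p * g x)| ^ 3)
          ≤ (1 + |g x| / 2) * (8 * |g x| ^ 3) := by
        apply mul_le_mul hub hle hnn
        positivity
      have h2 : (1 + |g x| / 2) * (8 * |g x| ^ 3) ≤ 12 * (1 + g x ^ 4) := by
        have hg4 : |g x| ^ 4 = g x ^ 4 := by
          rw [← abs_pow, abs_of_nonneg (by positivity)]
        have := hg3le x
        nlinarith [abs_nonneg (g x)]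
      linarith
    · refine ae_of_all _ fun x => ?_
      have h1 : Tendsto (fun p : ℝ => 1 + p * g x) (𝓝[>] (0:ℝ)) (𝓝 1) := by
        have : Tendsto (fun p : ℝ => 1 + p * g x) (𝓝 (0:ℝ)) (𝓝 (1 + 0 * g x)) := by
          exact (continuous_const.add (continuous_id.mul continuous_const)).tendsto 0
        simpa using this.mono_left nhdsWithin_le_nhds
      have h2 := h1.mul (aux_tendsto (g x))
      rw [one_mul] at h2
      refine h2.congr fun p => by ring
  -- rewrite the statement functions
  have e1 : (fun p : ℝ => (1 / p ^ 3) *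
        ∫ x in Set.Icc (0:ℝ) 1, |Real.log (1 + p * g x)| ^ 3)
      = fun p : ℝ => ∫ x in Set.Icc (0:ℝ) 1, (1/p^3) * |Real.log (1 + p * g x)| ^ 3 := by
    funext p; rw [integral_const_mul]
  have e2 : (fun p : ℝ => (1 / p ^ 3) *
        ∫ x in Set.Icc (0:ℝ) 1, (1 + p * g x) * |Real.log (1 + p * g x)| ^ 3)
      = fun p : ℝ => ∫ x in Set.Icc (0:ℝ) 1,
          (1/p^3) * ((1 + p * g x) * |Real.log (1 + p * g x)| ^ 3) := by
    funext p; rw [integral_const_mul]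
  have G1 : Tendsto
      (fun p : ℝ => (1 / p ^ 3) *
        ∫ x in Set.Icc (0:ℝ) 1, |Real.log (1 + p * g x)| ^ 3)
      (𝓝[>] (0:ℝ)) (𝓝 (∫ x in Set.Icc (0:ℝ) 1, |g x| ^ 3)) := by rw [e1]; exact T1
  have G2 : Tendsto
      (fun p : ℝ => (1 / p ^ 3) *
        ∫ x in Set.Icc (0:ℝ) 1, (1 + p * g x) * |Real.log (1 + p * g x)| ^ 3)
      (𝓝[>] (0:ℝ)) (𝓝 (∫ x in Set.Icc (0:ℝ) 1, |g x| ^ 3)) := by rw [e2]; exact T2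
  have hid : Tendsto (fun p : ℝ => p) (𝓝[>] (0:ℝ)) (𝓝 0) :=
    tendsto_id.mono_right nhdsWithin_le_nhds
  have G3 : Tendsto
      (fun p : ℝ => (1 / p ^ 2) *
        ∫ x in Set.Icc (0:ℝ) 1, |Real.log (1 + p * g x)| ^ 3)
      (𝓝[>] (0:ℝ)) (𝓝 0) := by
    have := hid.mul G1
    rw [zero_mul] at this
    refine this.congr' ?_
    filter_upwards [self_mem_nhdsWithin] with p (hp : p ∈ Ioi (0:ℝ))
    have hp0 : p ≠ 0 := ne_of_gt hp
    field_simp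
  have G4 : Tendsto
      (fun p : ℝ => (1 / p ^ 2) *
        ∫ x in Set.Icc (0:ℝ) 1, (1 + p * g x) * |Real.log (1 + p * g x)| ^ 3)
      (𝓝[>] (0:ℝ)) (𝓝 0) := by
    have := hid.mul G2
    rw [zero_mul] at this
    refine this.congr' ?_
    filter_upwards [self_mem_nhdsWithin] with p (hp : p ∈ Ioi (0:ℝ))
    have hp0 : p ≠ 0 := ne_of_gt hp
    field_simp
  exact ⟨G1, G2, G3, G4⟩
end
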